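/- arXiv:2501.17583 — 6 statements merged into one kernel-verified Lean document; each statement's English description precedes it below -/
import Mathlib

section
/- Let m ≥ 1 and let F₁, …, F_p ∈ ℝ⟦X₁, …, X_m⟧ be nonzero formal power series. Then all of F₁, …, F_p are normal if and only if the product F₁ ⋯ F_p is normal. -/
open MvPowerSeries

section KillX

variable {σ : Type*} {R : Type*} [CommRing R]

/-- The ring hom setting `X j := 0` on multivariate power series. -/
noncomputable def killX (j : σ) : MvPowerSeries σ R →+* MvPowerSeries σ R where
  toFun φ := fun d => if d j = 0 then MvPowerSeries.coeff d φ else 0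
  map_one' := by
    classical
    ext d
    rw [MvPowerSeries.coeff_apply]
    show (if d j = 0 then MvPowerSeries.coeff d 1 else 0) = MvPowerSeries.coeff d 1
    by_cases h : d j = 0
    · rw [if_pos h]
    · rw [if_neg h, MvPowerSeries.coeff_one, if_neg]
      intro hd
      exact h (by simp [hd])
  map_mul' φ ψ := by
    classical
    ext d
    show (if d j = 0 then MvPowerSeries.coeff d (φ * ψ) else 0) = _
    conv_rhs => erw [MvPowerSeries.coeff_mul]
    by_cases h : d j = 0
    · simp only [h, if_pos rfl, MvPowerSeries.coeff_mul]
      apply Finset.sum_congr rfl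
      rintro ⟨u, v⟩ huv
      rw [Finset.HasAntidiagonal.mem_antidiagonal] at huv
      have hadd : u j + v j = 0 := by
        have := congrArg (fun f => f j) huv
        simp only [Finsupp.coe_add, Pi.add_apply] at this
        omega
      have hu : u j = 0 ∧ v j = 0 :=
        ⟨Nat.eq_zero_of_add_eq_zero_right hadd, Nat.eq_zero_of_add_eq_zero_left hadd⟩
      show MvPowerSeries.coeff u φ * MvPowerSeries.coeff v ψ =
        (if u j = 0 then MvPowerSeries.coeff u φ else 0) * (if v j = 0 then MvPowerSeries.coeff v ψ else 0)
      simp [MvPowerSeries.coeff_apply, hu.1, hu.2]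
    · simp only [h, if_neg]
      rw [eq_comm]
      apply Finset.sum_eq_zero
      rintro ⟨u, v⟩ huv
      rw [Finset.HasAntidiagonal.mem_antidiagonal] at huv
      have : u j ≠ 0 ∨ v j ≠ 0 := by
        by_contra hc
        push_neg at hc
        apply h
        have := congrArg (fun f => f j) huv
        simp only [Finsupp.coe_add, Pi.add_apply] at this
        omega
      show (if u j = 0 then MvPowerSeries.coeff u φ else 0) *
        (if v j = 0 then MvPowerSeries.coeff v ψ else 0) = 0
      rcases this with hu | hv
      · simp [MvPowerSeries.coeff_apply, hu]
      · simp [MvPowerSeries.coeff_apply, hv]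
  map_zero' := by
    ext d
    rw [MvPowerSeries.coeff_apply]
    show (if d j = 0 then MvPowerSeries.coeff d 0 else 0) = MvPowerSeries.coeff d 0
    simp
  map_add' φ ψ := by
    ext d
    show (if d j = 0 then MvPowerSeries.coeff d (φ + ψ) else 0) =
      (if d j = 0 then MvPowerSeries.coeff d φ else 0) + (if d j = 0 then MvPowerSeries.coeff d ψ else 0)
    simp only [MvPowerSeries.coeff_apply, map_add]
    by_cases h : d j = 0 <;> simp [h, MvPowerSeries.coeff_apply]

theorem killX_eq_zero_iff (j : σ) (φ : MvPowerSeries σ R) :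
    killX j φ = 0 ↔ (MvPowerSeries.X j : MvPowerSeries σ R) ∣ φ := by
  rw [MvPowerSeries.X_dvd_iff]
  constructor
  · intro h d hd
    have := congrArg (fun f => f d) h
    change (if d j = 0 then MvPowerSeries.coeff d φ else 0) = 0 at this
    simpa [killX, MvPowerSeries.coeff_apply, hd] using this
  · intro h
    ext d
    simp only [killX, RingHom.coe_mk, MonoidHom.coe_mk, OneHom.coe_mk,
      MvPowerSeries.coeff_apply]
    show (if d j = 0 then MvPowerSeries.coeff d φ else 0) = MvPowerSeries.coeff d 0
    by_cases hd : d j = 0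
    · simp [hd, h d hd]
    · simp [hd]

theorem MvPowerSeries.X_prime' {R : Type*} [CommRing R] [IsDomain R] [DecidableEq σ] (j : σ) :
    Prime (MvPowerSeries.X j : MvPowerSeries σ R) := by
  constructor
  · intro h
    have := congrArg (MvPowerSeries.coeff (Finsupp.single j 1)) h
    rw [MvPowerSeries.coeff_X, if_pos rfl] at this
    simp at this
  constructor
  · intro h
    have := MvPowerSeries.isUnit_constantCoeff _ h
    rw [MvPowerSeries.constantCoeff_X] at this
    exact not_isUnit_zero this
  · intro a b hab
    rw [← killX_eq_zero_iff] at hab ⊢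
    rw [← killX_eq_zero_iff (R := R) j b]
    rw [map_mul] at hab
    exact mul_eq_zero.mp hab

end KillX

/-- A nonzero formal power series `F ∈ ℝ⟦X₁, …, X_m⟧` is *normal* if `F = X^α · U`
for some `α ∈ ℕ^m` and some unit `U`. -/
def IsNormal {m : ℕ} (F : MvPowerSeries (Fin m) ℝ) : Prop :=
  ∃ (α : Fin m → ℕ) (U : MvPowerSeries (Fin m) ℝ),
    IsUnit U ∧ F = (∏ i, MvPowerSeries.X i ^ α i) * U

lemma prod_X_pow_update {m : ℕ} (j : Fin m) (β : Fin m → ℕ) (b : ℕ) :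
    (∏ i, (MvPowerSeries.X i : MvPowerSeries (Fin m) ℝ) ^ Function.update β j b i)
      = MvPowerSeries.X j ^ b *
        ∏ i ∈ Finset.univ \ {j}, (MvPowerSeries.X i : MvPowerSeries (Fin m) ℝ) ^ β i := by
  rw [Finset.prod_eq_mul_prod_sdiff_singleton_of_mem (Finset.mem_univ j)]
  congr 1
  · rw [Function.update_self]
  · refine Finset.prod_congr rfl fun k hk => ?_
    have hkj : k ≠ j := by
      have := (Finset.mem_sdiff.mp hk).2
      simpa using this
    rw [Function.update_of_ne hkj]

lemma IsNormal.X_mul {m : ℕ} (j : Fin m) {G : MvPowerSeries (Fin m) ℝ}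
    (hG : IsNormal G) : IsNormal (MvPowerSeries.X j * G) := by
  obtain ⟨β, V, hV, hGe⟩ := hG
  refine ⟨Function.update β j (β j + 1), V, hV, ?_⟩
  rw [hGe, ← mul_assoc, prod_X_pow_update,
    Finset.prod_eq_mul_prod_sdiff_singleton_of_mem (Finset.mem_univ j)
      (fun i => (MvPowerSeries.X i : MvPowerSeries (Fin m) ℝ) ^ β i),
    pow_succ']
  ring

lemma isNormal_of_prod_aux {m p : ℕ} :
    ∀ (n : ℕ) (F : Fin p → MvPowerSeries (Fin m) ℝ) (α : Fin m → ℕ)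
      (U : MvPowerSeries (Fin m) ℝ), (∀ i, F i ≠ 0) → IsUnit U →
      (∑ j, α j) = n → (∏ i, F i) = (∏ j, MvPowerSeries.X j ^ α j) * U →
      ∀ i, IsNormal (F i) := by
  intro n
  induction n with
  | zero =>
    intro F α U hF hU hsum hprod i
    have hα : ∀ j, α j = 0 := fun j => Finset.sum_eq_zero_iff.mp hsum j (Finset.mem_univ j)
    have h1 : (∏ j, (MvPowerSeries.X j : MvPowerSeries (Fin m) ℝ) ^ α j) = 1 := by
      simp [hα]
    rw [h1, one_mul] at hprod
    have : IsUnit (F i) :=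
      isUnit_of_dvd_unit (Finset.dvd_prod_of_mem F (Finset.mem_univ i)) (hprod ▸ hU)
    exact ⟨0, F i, this, by simp⟩
  | succ n ih =>
    intro F α U hF hU hsum hprod i
    have hex : ∃ j, α j ≠ 0 := by
      by_contra h
      push_neg at h
      simp [h] at hsum
    obtain ⟨j, hj⟩ := hex
    have hXprime := MvPowerSeries.X_prime' (R := ℝ) j
    have hXdvd : (MvPowerSeries.X j : MvPowerSeries (Fin m) ℝ) ∣ ∏ i, F i := by
      rw [hprod]
      exact Dvd.dvd.mul_right
        (dvd_trans (dvd_pow_self (MvPowerSeries.X j : MvPowerSeries (Fin m) ℝ) hj) (Finset.dvd_prod_of_mem (fun k => (MvPowerSeries.X k : MvPowerSeries (Fin m) ℝ) ^ α k) (Finset.mem_univ j))) _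
    obtain ⟨i₀, -, G, hG⟩ := hXprime.exists_mem_finset_dvd hXdvd
    have hG0 : G ≠ 0 := by
      intro h
      exact hF i₀ (by rw [hG, h, mul_zero])
    set F' := Function.update F i₀ G with hF'def
    have hF' : ∀ k, F' k ≠ 0 := by
      intro k
      by_cases hk : k = i₀
      · subst hk; simpa [hF'def] using hG0
      · simpa [hF'def, Function.update_of_ne hk] using hF k
    set α' := Function.update α j (α j - 1) with hα'def
    have hsum' : (∑ k, α' k) = n := by
      have h1 : (∑ k, α' k) = (α j - 1) + ∑ k ∈ Finset.univ \ {j}, α k := by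
        rw [hα'def, Finset.sum_update_of_mem (Finset.mem_univ j)]
      have h2 : (∑ k, α k) = α j + ∑ k ∈ Finset.univ \ {j}, α k :=
        Finset.sum_eq_add_sum_sdiff_singleton_of_mem (Finset.mem_univ j) α
      omega
    have hXF : MvPowerSeries.X j * ∏ k, F' k = ∏ k, F k := by
      have h1 : (∏ k, F' k) = G * ∏ k ∈ Finset.univ \ {i₀}, F k := by
        rw [hF'def, Finset.prod_update_of_mem (Finset.mem_univ i₀)]
      have h2 : (∏ k, F k) = F i₀ * ∏ k ∈ Finset.univ \ {i₀}, F k :=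
        Finset.prod_eq_mul_prod_sdiff_singleton_of_mem (Finset.mem_univ i₀) F
      rw [h1, h2, hG, mul_assoc]
    have hXα : MvPowerSeries.X j *
        ∏ k, (MvPowerSeries.X k : MvPowerSeries (Fin m) ℝ) ^ α' k
        = ∏ k, (MvPowerSeries.X k : MvPowerSeries (Fin m) ℝ) ^ α k := by
      have h2 : (∏ k, (MvPowerSeries.X k : MvPowerSeries (Fin m) ℝ) ^ α k)
          = MvPowerSeries.X j ^ α j *
            ∏ k ∈ Finset.univ \ {j}, (MvPowerSeries.X k : MvPowerSeries (Fin m) ℝ) ^ α k :=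
        Finset.prod_eq_mul_prod_sdiff_singleton_of_mem (Finset.mem_univ j) _
      have hαj : α j - 1 + 1 = α j := by omega
      rw [hα'def, prod_X_pow_update, h2, ← mul_assoc, ← pow_succ', hαj]
    have hprod' : (∏ k, F' k) = (∏ k, MvPowerSeries.X k ^ α' k) * U := by
      apply mul_left_cancel₀ hXprime.ne_zero
      rw [hXF, hprod, ← mul_assoc, hXα]
    have hnorm' := ih F' α' U hF' hU hsum' hprod'
    by_cases hi : i = i₀
    · subst hi
      have : IsNormal G := by simpa [hF'def] using hnorm' i
      rw [hG]
      exact this.X_mul j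
    · simpa [hF'def, Function.update_of_ne hi] using hnorm' i

/-- Nonzero series `F₁, …, F_p` are all normal iff their product is normal. -/
theorem normal_iff_prod_normal (m p : ℕ) (hm : 1 ≤ m)
    (F : Fin p → MvPowerSeries (Fin m) ℝ) (hF : ∀ i, F i ≠ 0) :
    (∀ i, IsNormal (F i)) ↔ IsNormal (∏ i, F i) := by
  constructor
  · intro h
    choose α U hU hFeq using h
    refine ⟨fun j => ∑ i, α i j, ∏ i, U i, ?_, ?_⟩
    · choose u hu using hU
      exact ⟨∏ i, u i, by rw [Units.coe_prod]; exact Finset.prod_congr rfl fun i _ => hu i⟩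
    · calc ∏ i, F i = ∏ i, ((∏ j, MvPowerSeries.X j ^ α i j) * U i) :=
            Finset.prod_congr rfl fun i _ => hFeq i
        _ = (∏ i, ∏ j, (MvPowerSeries.X j : MvPowerSeries (Fin m) ℝ) ^ α i j) * ∏ i, U i :=
            Finset.prod_mul_distrib
        _ = (∏ j, MvPowerSeries.X j ^ ∑ i, α i j) * ∏ i, U i := by
            rw [Finset.prod_comm]
            congr 1
            exact Finset.prod_congr rfl fun j _ => Finset.prod_pow_eq_pow_sum _ _ _
  · intro h
    obtain ⟨α, U, hU, hprod⟩ := h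
    exact isNormal_of_prod_aux (∑ j, α j) F α U hF hU rfl hprod
end

section
/- Let m ≥ 1 and let F, G ∈ ℝ⟦X₁, …, X_m⟧ be nonzero formal power series such that F, G and F − G are all normal. Then F divides G or G divides F in ℝ⟦X₁, …, X_m⟧. -/
open MvPowerSeries

lemma prod_X_pow_eq_monomial {m : ℕ} (α : Fin m → ℕ) :
    (∏ i, (MvPowerSeries.X i : MvPowerSeries (Fin m) ℝ) ^ α i)
      = MvPowerSeries.monomial (∑ i, Finsupp.single i (α i)) 1 := by
  classical
  rw [show (∑ i, Finsupp.single i (α i)) = ∑ i ∈ Finset.univ, Finsupp.single i (α i) from rfl]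
  induction (Finset.univ : Finset (Fin m)) using Finset.cons_induction with
  | empty => simp
  | cons a s h ih =>
      rw [Finset.prod_cons, Finset.sum_cons, ih, MvPowerSeries.X_pow_eq,
        MvPowerSeries.monomial_mul_monomial, one_mul]

lemma sum_single_apply {m : ℕ} (α : Fin m → ℕ) (i : Fin m) :
    (∑ j, Finsupp.single j (α j)) i = α i := by
  classical
  rw [Finset.sum_apply']
  rw [Finset.sum_eq_single i (fun j _ hj => Finsupp.single_eq_of_ne' hj)
    (fun h => absurd (Finset.mem_univ i) h)]
  simp

/-- If `F`, `G` and `F − G` are all normal, then `F ∣ G` or `G ∣ F`. -/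
theorem normal_sub_normal_dvd (m : ℕ) (hm : 1 ≤ m)
    (F G : MvPowerSeries (Fin m) ℝ) (hF0 : F ≠ 0) (hG0 : G ≠ 0)
    (hF : IsNormal F) (hG : IsNormal G) (hFG : IsNormal (F - G)) :
    F ∣ G ∨ G ∣ F := by
  classical
  obtain ⟨α, U, hU, hFe⟩ := hF
  obtain ⟨β, V, hV, hGe⟩ := hG
  obtain ⟨γ, W, hW, hFGe⟩ := hFG
  set A : Fin m →₀ ℕ := ∑ i, Finsupp.single i (α i) with hA
  set B : Fin m →₀ ℕ := ∑ i, Finsupp.single i (β i) with hB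
  set C : Fin m →₀ ℕ := ∑ i, Finsupp.single i (γ i) with hC
  rw [prod_X_pow_eq_monomial] at hFe hGe hFGe
  have hU0 : MvPowerSeries.constantCoeff U ≠ 0 :=
    (MvPowerSeries.isUnit_constantCoeff U hU).ne_zero
  have hV0 : MvPowerSeries.constantCoeff V ≠ 0 :=
    (MvPowerSeries.isUnit_constantCoeff V hV).ne_zero
  have hW0 : MvPowerSeries.constantCoeff W ≠ 0 :=
    (MvPowerSeries.isUnit_constantCoeff W hW).ne_zero
  -- coefficient formulas
  have cF : ∀ d : Fin m →₀ ℕ, MvPowerSeries.coeff d F =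
      if A ≤ d then MvPowerSeries.coeff (d - A) U else 0 := by
    intro d; rw [hFe, MvPowerSeries.coeff_monomial_mul]; simp [hA, hB, hC]
  have cG : ∀ d : Fin m →₀ ℕ, MvPowerSeries.coeff d G =
      if B ≤ d then MvPowerSeries.coeff (d - B) V else 0 := by
    intro d; rw [hGe, MvPowerSeries.coeff_monomial_mul]; simp [hA, hB, hC]
  have cFG : ∀ d : Fin m →₀ ℕ, MvPowerSeries.coeff d (F - G) =
      if C ≤ d then MvPowerSeries.coeff (d - C) W else 0 := by
    intro d; rw [hFGe, MvPowerSeries.coeff_monomial_mul]; simp [hA, hB, hC]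
  have key : A ≤ B ∨ B ≤ A := by
    by_contra h
    push_neg at h
    obtain ⟨hAB, hBA⟩ := h
    -- coeff at B of F - G is nonzero
    have hFB : MvPowerSeries.coeff B F = 0 := by
      rw [cF B, if_neg hAB]
    have hGB : MvPowerSeries.coeff B G ≠ 0 := by
      rw [cG B, if_pos le_rfl]
      simpa [MvPowerSeries.coeff_zero_eq_constantCoeff] using hV0
    have hCB : C ≤ B := by
      by_contra hCB
      have : MvPowerSeries.coeff B (F - G) = 0 := by rw [cFG B, if_neg hCB]
      rw [map_sub, hFB, zero_sub, neg_eq_zero] at this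
      exact hGB this
    -- coeff at A similarly
    have hGA : MvPowerSeries.coeff A G = 0 := by
      rw [cG A, if_neg hBA]
    have hFA : MvPowerSeries.coeff A F ≠ 0 := by
      rw [cF A, if_pos le_rfl]
      simpa [MvPowerSeries.coeff_zero_eq_constantCoeff] using hU0
    have hCA : C ≤ A := by
      by_contra hCA
      have : MvPowerSeries.coeff A (F - G) = 0 := by rw [cFG A, if_neg hCA]
      rw [map_sub, hGA, sub_zero] at this
      exact hFA this
    -- coeff at C of F - G is nonzero
    have hFGC : MvPowerSeries.coeff C (F - G) ≠ 0 := by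
      rw [cFG C, if_pos le_rfl]
      simpa [MvPowerSeries.coeff_zero_eq_constantCoeff] using hW0
    rw [map_sub] at hFGC
    have hFC : MvPowerSeries.coeff C F = 0 := by
      rw [cF C, if_neg]
      intro hAC
      exact hAB (hAC.trans hCB)
    have hGC : MvPowerSeries.coeff C G = 0 := by
      rw [cG C, if_neg]
      intro hBC
      exact hBA (hBC.trans hCA)
    rw [hFC, hGC, sub_zero] at hFGC
    exact hFGC rfl
  obtain ⟨u, hu⟩ := hU
  obtain ⟨v, hv⟩ := hV
  rcases key with hle | hle
  · left
    refine ⟨(↑u⁻¹ : MvPowerSeries (Fin m) ℝ) *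
      MvPowerSeries.monomial (B - A) 1 * V, ?_⟩
    rw [hGe, hFe, ← hu]
    have : (A : Fin m →₀ ℕ) + (B - A) = B := by
      ext i
      simp only [Finsupp.coe_add, Finsupp.coe_tsub, Pi.add_apply, Pi.sub_apply]
      exact Nat.add_sub_cancel' (hle i)
    calc MvPowerSeries.monomial B 1 * V
        = MvPowerSeries.monomial (A + (B - A)) 1 * V := by rw [this]
      _ = (MvPowerSeries.monomial A 1 * MvPowerSeries.monomial (B - A) 1) * V := by
          rw [MvPowerSeries.monomial_mul_monomial, one_mul]
      _ = MvPowerSeries.monomial A 1 * ↑u * (↑u⁻¹ * MvPowerSeries.monomial (B - A) 1 * V) := by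
          rw [mul_assoc (MvPowerSeries.monomial A 1 : MvPowerSeries (Fin m) ℝ) (↑u)]
          rw [← mul_assoc (↑u : MvPowerSeries (Fin m) ℝ)]
          rw [← mul_assoc (↑u : MvPowerSeries (Fin m) ℝ)]
          rw [u.mul_inv, one_mul, mul_assoc]
  · right
    refine ⟨(↑v⁻¹ : MvPowerSeries (Fin m) ℝ) *
      MvPowerSeries.monomial (A - B) 1 * U, ?_⟩
    rw [hGe, hFe, ← hv]
    have : (B : Fin m →₀ ℕ) + (A - B) = A := by
      ext i
      simp only [Finsupp.coe_add, Finsupp.coe_tsub, Pi.add_apply, Pi.sub_apply]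
      exact Nat.add_sub_cancel' (hle i)
    calc MvPowerSeries.monomial A 1 * U
        = MvPowerSeries.monomial (B + (A - B)) 1 * U := by rw [this]
      _ = (MvPowerSeries.monomial B 1 * MvPowerSeries.monomial (A - B) 1) * U := by
          rw [MvPowerSeries.monomial_mul_monomial, one_mul]
      _ = MvPowerSeries.monomial B 1 * ↑v * (↑v⁻¹ * MvPowerSeries.monomial (A - B) 1 * U) := by
          rw [mul_assoc (MvPowerSeries.monomial B 1 : MvPowerSeries (Fin m) ℝ) (↑v)]
          rw [← mul_assoc (↑v : MvPowerSeries (Fin m) ℝ)]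
          rw [← mul_assoc (↑v : MvPowerSeries (Fin m) ℝ)]
          rw [v.mul_inv, one_mul, mul_assoc]
end

section
/- Let m ≥ 2, let i, j ∈ {1, …, m} with i ≠ j, and let λ ∈ ℝ. The ring endomorphism of ℝ⟦X₁, …, X_m⟧ given by the substitution X_i ↦ X_j·(λ + X_i) and X_k ↦ X_k for k ≠ i (this substitution is well defined because X_j·(λ + X_i) has zero constant term)is injective. -/
/-- `IsSubstitutionBy σ φ` says that the ℝ-algebra endomorphism `φ` of
`ℝ⟦X₁, …, X_m⟧` is the substitution `X_k ↦ σ k`: it sends each variable `X_k`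
to `σ k`, and it does not decrease the order of series (which, together with the
values on the variables, uniquely determines the substitution endomorphism when
each `σ k` has zero constant term). -/
def IsSubstitutionBy {m : ℕ} (σ : Fin m → MvPowerSeries (Fin m) ℝ)
    (φ : MvPowerSeries (Fin m) ℝ →ₐ[ℝ] MvPowerSeries (Fin m) ℝ) : Prop :=
  (∀ k, φ (MvPowerSeries.X k) = σ k) ∧
  ∀ (F : MvPowerSeries (Fin m) ℝ) (d : ℕ),
    (∀ α : Fin m →₀ ℕ, (∑ j, α j) < d → MvPowerSeries.coeff (R := ℝ) α F = 0) →
    ∀ β : Fin m →₀ ℕ, (∑ j, β j) < d → MvPowerSeries.coeff (R := ℝ) β (φ F) = 0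

section BlowupAux

open MvPowerSeries Finsupp Finset

variable {m : ℕ} (i j : Fin m)

/-- Exponent of the `t`-th term in the expansion of `∏ₖ σₖ^{αₖ}` for the blow-up
substitution. -/
noncomputable def Eexp (α : Fin m →₀ ℕ) (t : ℕ) : Fin m →₀ ℕ :=
  α.erase i + Finsupp.single i t + Finsupp.single j (α i)

theorem Eexp_apply_i (hij : i ≠ j) (α : Fin m →₀ ℕ) (t : ℕ) : Eexp i j α t i = t := by
  simp [Eexp, Finsupp.single_apply, hij, Ne.symm hij]

theorem Eexp_apply_j (hij : i ≠ j) (α : Fin m →₀ ℕ) (t : ℕ) : Eexp i j α t j = α j + α i := by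
  simp [Eexp, Finsupp.single_apply, hij, Ne.symm hij]

theorem Eexp_apply_ne (α : Fin m →₀ ℕ) (t : ℕ) (k : Fin m) (hki : k ≠ i) (hkj : k ≠ j) :
    Eexp i j α t k = α k := by
  simp [Eexp, Finsupp.single_apply, hki, Ne.symm hki, Ne.symm hkj]

theorem prod_monomial {ι : Type*} (s : Finset ι) (f : ι → (Fin m →₀ ℕ)) :
    (∏ k ∈ s, monomial (R := ℝ) (f k) 1) = monomial (R := ℝ) (∑ k ∈ s, f k) 1 := by
  classical
  induction s using Finset.induction with
  | empty => simp [MvPowerSeries.monomial_zero_one]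
  | insert a s hx ih =>
      rw [Finset.prod_insert hx, Finset.sum_insert hx, ih, monomial_mul_monomial, one_mul]

theorem monomial_one_eq (α : Fin m →₀ ℕ) :
    monomial (R := ℝ) α (1 : ℝ) = ∏ k, (X k : MvPowerSeries (Fin m) ℝ) ^ α k := by
  simp_rw [X_pow_eq, prod_monomial]
  congr 1
  ext l
  simp [Finsupp.single_apply]

theorem erase_sum_single (α : Fin m →₀ ℕ) :
    (∑ k ∈ Finset.univ.erase i, Finsupp.single k (α k)) = α.erase i := by
  ext l
  rw [Finsupp.finset_sum_apply]
  simp_rw [Finsupp.single_apply]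
  rw [Finset.sum_ite_eq' (Finset.univ.erase i) l (fun k => α k)]
  simp [Finsupp.erase_apply, eq_comm]

theorem M_eq (hij : i ≠ j) (lam : ℝ) (α : Fin m →₀ ℕ) :
    (∏ k, (if k = i then X j * (MvPowerSeries.C (σ := Fin m) (R := ℝ) lam + X i) else X k) ^ α k)
      = ∑ t ∈ range (α i + 1),
          monomial (R := ℝ) (Eexp i j α t) (((α i).choose t : ℝ) * lam ^ (α i - t)) := by
  classical
  rw [← Finset.mul_prod_erase Finset.univ _ (Finset.mem_univ i)]
  have h1 : (∏ k ∈ Finset.univ.erase i,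
      (if k = i then X j * (MvPowerSeries.C (σ := Fin m) (R := ℝ) lam + X i) else X k) ^ α k)
      = monomial (R := ℝ) (α.erase i) 1 := by
    rw [← erase_sum_single i α, ← prod_monomial]
    apply Finset.prod_congr rfl
    intro k hk
    rw [if_neg (Finset.mem_erase.mp hk).1, X_pow_eq]
  rw [h1, if_pos rfl]
  have h2 : (X j * (MvPowerSeries.C (σ := Fin m) (R := ℝ) lam + X i)) ^ α i
      = monomial (R := ℝ) (Finsupp.single j (α i)) 1 *
        ∑ t ∈ range (α i + 1),
          monomial (R := ℝ) (Finsupp.single i t) (((α i).choose t : ℝ) * lam ^ (α i - t)) := by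
    rw [mul_pow, ← X_pow_eq]
    congr 1
    rw [add_comm, add_pow]
    apply Finset.sum_congr rfl
    intro t _
    rw [X_pow_eq, ← map_pow (MvPowerSeries.C (σ := Fin m) (R := ℝ)), ← monomial_zero_eq_C_apply,
      mul_assoc]
    rw [show (((α i).choose t : ℕ) : MvPowerSeries (Fin m) ℝ)
        = monomial (R := ℝ) 0 (((α i).choose t : ℕ) : ℝ) by
      rw [monomial_zero_eq_C_apply, map_natCast]]
    rw [monomial_mul_monomial, monomial_mul_monomial]
    simp [mul_comm]
  rw [h2, mul_comm, ← mul_assoc, monomial_mul_monomial, one_mul, Finset.mul_sum]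
  apply Finset.sum_congr rfl
  intro t _
  rw [monomial_mul_monomial, one_mul]
  congr 1
  simp only [Eexp]
  abel

theorem coeff_M (hij : i ≠ j) (lam : ℝ) (α β : Fin m →₀ ℕ) :
    MvPowerSeries.coeff (R := ℝ) β
      (∏ k, (if k = i then X j * (MvPowerSeries.C (σ := Fin m) (R := ℝ) lam + X i) else X k) ^ α k)
      = if β i ≤ α i ∧ β = Eexp i j α (β i)
        then ((α i).choose (β i) : ℝ) * lam ^ (α i - β i) else 0 := by
  classical
  rw [M_eq i j hij lam α, map_sum]
  simp_rw [MvPowerSeries.coeff_monomial]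
  by_cases h : β i ≤ α i
  · rw [Finset.sum_eq_single (β i)]
    · by_cases hb : β = Eexp i j α (β i)
      · rw [if_pos hb, if_pos ⟨h, hb⟩]
      · rw [if_neg hb, if_neg (fun hc => hb hc.2)]
    · intro t _ hne
      rw [if_neg]
      intro hb
      exact hne ((show β i = t by rw [hb, Eexp_apply_i i j hij]).symm)
    · intro hb
      exact absurd (Finset.mem_range.mpr (Nat.lt_succ_of_le h)) hb
  · rw [if_neg (fun hc => h hc.1), Finset.sum_eq_zero]
    intro t ht
    rw [if_neg]
    intro hb
    have h1 : β i = t := by rw [hb, Eexp_apply_i i j hij]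
    have h2 := Finset.mem_range.mp ht
    omega

theorem coeff_phi {m : ℕ} (σ : Fin m → MvPowerSeries (Fin m) ℝ)
    (φ : MvPowerSeries (Fin m) ℝ →ₐ[ℝ] MvPowerSeries (Fin m) ℝ)
    (hφ : IsSubstitutionBy σ φ) (F : MvPowerSeries (Fin m) ℝ) (β : Fin m →₀ ℕ) :
    MvPowerSeries.coeff (R := ℝ) β (φ F)
      = ∑ α ∈ Finset.Iic (equivFunOnFinite.symm (fun _ : Fin m => ∑ k, β k)),
          MvPowerSeries.coeff (R := ℝ) α F * MvPowerSeries.coeff (R := ℝ) β (∏ k, (σ k) ^ α k) := by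
  classical
  set A := Finset.Iic (equivFunOnFinite.symm (fun _ : Fin m => ∑ k, β k)) with hA
  set P : MvPowerSeries (Fin m) ℝ :=
    ∑ α ∈ A, monomial (R := ℝ) α (MvPowerSeries.coeff (R := ℝ) α F) with hP
  have hmem : ∀ γ : Fin m →₀ ℕ, (∑ k, γ k) < (∑ k, β k) + 1 → γ ∈ A := by
    intro γ hγ
    rw [hA, Finset.mem_Iic]
    intro k
    have h1 : γ k ≤ ∑ k, γ k :=
      Finset.single_le_sum (fun _ _ => Nat.zero_le _) (Finset.mem_univ k)
    simpa using h1.trans (Nat.lt_succ_iff.mp hγ)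
  have hPco : ∀ γ : Fin m →₀ ℕ, (∑ k, γ k) < (∑ k, β k) + 1 →
      MvPowerSeries.coeff (R := ℝ) γ (F - P) = 0 := by
    intro γ hγ
    rw [map_sub, hP, map_sum]
    simp_rw [MvPowerSeries.coeff_monomial]
    rw [Finset.sum_ite_eq A γ (fun α => MvPowerSeries.coeff (R := ℝ) α F), if_pos (hmem γ hγ)]
    ring
  have h0 : MvPowerSeries.coeff (R := ℝ) β (φ (F - P)) = 0 :=
    hφ.2 (F - P) ((∑ k, β k) + 1) hPco β (Nat.lt_succ_self _)
  rw [map_sub, map_sub] at h0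
  have hβ : MvPowerSeries.coeff (R := ℝ) β (φ F) = MvPowerSeries.coeff (R := ℝ) β (φ P) := by
    linarith [h0]
  rw [hβ, hP, map_sum, map_sum]
  apply Finset.sum_congr rfl
  intro α _
  have hmono : monomial (R := ℝ) α (MvPowerSeries.coeff (R := ℝ) α F)
      = MvPowerSeries.C (σ := Fin m) (R := ℝ) (MvPowerSeries.coeff (R := ℝ) α F) * monomial (R := ℝ) α 1 := by
    rw [← monomial_zero_eq_C_apply, monomial_mul_monomial, zero_add, mul_one]
  rw [hmono, map_mul, c_eq_algebraMap, AlgHom.commutes, ← c_eq_algebraMap,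
    MvPowerSeries.coeff_C_mul, monomial_one_eq, map_prod]
  simp_rw [map_pow, hφ.1]

end BlowupAux

/-- The blow-up chart `π_{i,j}^λ` (`X_i ↦ X_j·(λ + X_i)`, `X_k ↦ X_k` for `k ≠ i`)
acts injectively on `ℝ⟦X₁, …, X_m⟧`. -/
theorem blowup_subst_injective (m : ℕ) (hm : 2 ≤ m) (i j : Fin m) (hij : i ≠ j)
    (lam : ℝ) (φ : MvPowerSeries (Fin m) ℝ →ₐ[ℝ] MvPowerSeries (Fin m) ℝ)
    (hφ : IsSubstitutionBy
      (fun k => if k = i then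
          MvPowerSeries.X j * (MvPowerSeries.C (σ := Fin m) (R := ℝ) lam + MvPowerSeries.X i)
        else MvPowerSeries.X k) φ) :
    Function.Injective φ := by
  classical
  rw [injective_iff_map_eq_zero]
  intro F hF
  have key : ∀ n : ℕ, ∀ α : Fin m →₀ ℕ, α j = n → MvPowerSeries.coeff (R := ℝ) α F = 0 := by
    intro n
    induction n using Nat.strong_induction_on with
    | _ n IH =>
      intro α hαj
      set β := Eexp i j α (α i) with hβdef
      have hβi : β i = α i := Eexp_apply_i i j hij α (α i)
      have hβj : β j = α j + α i := Eexp_apply_j i j hij α (α i)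
      have hβk : ∀ k, k ≠ i → k ≠ j → β k = α k := fun k hki hkj =>
        Eexp_apply_ne i j α (α i) k hki hkj
      have h0 : MvPowerSeries.coeff (R := ℝ) β (φ F) = 0 := by rw [hF]; simp
      rw [coeff_phi _ φ hφ F β] at h0
      simp_rw [coeff_M i j hij lam] at h0
      rw [Finset.sum_eq_single α] at h0
      · -- the remaining term is `coeff α F * 1`
        have hcond : β i ≤ α i ∧ β = Eexp i j α (β i) := by
          constructor
          · rw [hβi]
          · rw [hβi]
        rw [if_pos hcond, hβi, Nat.choose_self, Nat.sub_self, pow_zero] at h0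
        simpa using h0
      · intro α' _ hne
        by_cases hc : β i ≤ α' i ∧ β = Eexp i j α' (β i)
        · obtain ⟨h1, h2⟩ := hc
          have e2 : β j = α' j + α' i := by rw [h2, Eexp_apply_j i j hij]
          have ek : ∀ k, k ≠ i → k ≠ j → β k = α' k := fun k hki hkj => by
            rw [h2, Eexp_apply_ne i j α' (β i) k hki hkj]
          have hii : α i ≤ α' i := by rw [← hβi]; exact h1
          have hlt : α' i ≠ α i := by
            intro heq
            apply hne
            ext k
            by_cases hki : k = i
            · rw [hki, heq]
            · by_cases hkj : k = j
              · subst hkj; omega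
              · rw [← ek k hki hkj, hβk k hki hkj]
          have hjlt : α' j < n := by omega
          rw [IH (α' j) hjlt α' rfl, zero_mul]
        · rw [if_neg hc, mul_zero]
      · intro hα
        exfalso
        apply hα
        rw [Finset.mem_Iic]
        intro k
        have h1 : β k ≤ ∑ k, β k :=
          Finset.single_le_sum (fun _ _ => Nat.zero_le _) (Finset.mem_univ k)
        have h2 : α k ≤ β k := by
          by_cases hki : k = i
          · subst hki; omega
          · by_cases hkj : k = j
            · subst hkj; omega
            · rw [hβk k hki hkj]
        simpa using h2.trans h1
  ext α
  rw [map_zero]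
  exact key (α j) α rfl
end

section
/- Let n, k ≥ 0 with n + k ≥ 1 and let M ⊆ ℝ^{n+k} be a d-dimensional C¹ submanifold such that the projection Π_n : ℝ^{n+k} → ℝⁿ onto the first n coordinates, restricted to M, has constant rank l (i.e. for every z ∈ M the restriction of Π_n to the tangent space T_zM of M at z has rank l). Then for every y ∈ Π_n(M), the fiber M_y = {z ∈ ℝ^k : (y, z) ∈ M} is a (d − l)-dimensional C¹ submanifold of ℝ^k. -/
/-- `M ⊆ ℝ^N` is a `d`-dimensional C¹ submanifold: every point of `M` has an open
neighborhood on which `M` can be straightened to `ℝ^d × {0}` by a C¹ diffeomorphism. -/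
def IsC1Submanifold (N d : ℕ) (M : Set (Fin N → ℝ)) : Prop :=
  ∀ x ∈ M, ∃ (U V : Set (Fin N → ℝ)) (φ ψ : (Fin N → ℝ) → (Fin N → ℝ)),
    IsOpen U ∧ IsOpen V ∧ x ∈ U ∧
    ContDiffOn ℝ 1 φ U ∧ ContDiffOn ℝ 1 ψ V ∧
    (∀ y ∈ U, φ y ∈ V) ∧ (∀ y ∈ V, ψ y ∈ U) ∧
    (∀ y ∈ U, ψ (φ y) = y) ∧ (∀ y ∈ V, φ (ψ y) = y) ∧
    φ '' (U ∩ M) = V ∩ {y | ∀ i : Fin N, d ≤ (i : ℕ) → y i = 0}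

/-- The tangent space of `M ⊆ ℝ^N` at `z`: the span of all velocity vectors at `z`
of C¹ curves through `z` staying in `M` near time `0`. -/
def tangentSpaceAt (N : ℕ) (M : Set (Fin N → ℝ)) (z : Fin N → ℝ) :
    Submodule ℝ (Fin N → ℝ) :=
  Submodule.span ℝ {v | ∃ γ : ℝ → (Fin N → ℝ),
    γ 0 = z ∧ (∀ᶠ t in nhds (0 : ℝ), γ t ∈ M) ∧ HasDerivAt γ v 0}

/-- The projection `Π_n : ℝ^{n+k} → ℝⁿ` onto the first `n` coordinates, as a linear map. -/
noncomputable def projFst (n k : ℕ) : (Fin (n + k) → ℝ) →ₗ[ℝ] (Fin n → ℝ) :=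
  LinearMap.funLeft ℝ ℝ (Fin.castAdd k)


open Set Filter Module





/-- The coordinate plane `{x : ℝ^N | x i = 0 for i ≥ d}` as a submodule. -/
def plane (N d : ℕ) : Submodule ℝ (Fin N → ℝ) where
  carrier := {x | ∀ i : Fin N, d ≤ (i : ℕ) → x i = 0}
  add_mem' := by intro a b ha hb i hi; simp [ha i hi, hb i hi]
  zero_mem' := by intro i hi; rfl
  smul_mem' := by intro c x hx i hi; simp [hx i hi]

lemma mem_plane {N d : ℕ} {x : Fin N → ℝ} :
    x ∈ plane N d ↔ ∀ i : Fin N, d ≤ (i : ℕ) → x i = 0 := Iff.rfl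

lemma plane_congr {N d d' : ℕ} (h : min d N = min d' N) : plane N d = plane N d' := by
  ext x
  simp only [mem_plane]
  constructor <;> intro hx i hi <;> apply hx i
  · omega
  · omega

/-- Extension-by-zero linear map realizing the plane. -/
noncomputable def planeExt (N d : ℕ) : (Fin (min d N) → ℝ) →ₗ[ℝ] (Fin N → ℝ) :=
  LinearMap.pi (fun i : Fin N =>
    if h : (i : ℕ) < min d N then LinearMap.proj (⟨(i : ℕ), h⟩ : Fin (min d N)) else 0)

lemma planeExt_apply {N d : ℕ} (c : Fin (min d N) → ℝ) (i : Fin N) :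
    planeExt N d c i = if h : (i : ℕ) < min d N then c ⟨(i : ℕ), h⟩ else 0 := by
  simp only [planeExt, LinearMap.pi_apply]
  split <;> simp_all

lemma planeExt_injective (N d : ℕ) : Function.Injective (planeExt N d) := by
  rw [injective_iff_map_eq_zero]
  intro c hc
  funext j
  have hj : ((⟨(j : ℕ), lt_of_lt_of_le j.2 (min_le_right d N)⟩ : Fin N) : ℕ) < min d N := j.2
  have := congrFun hc ⟨(j : ℕ), lt_of_lt_of_le j.2 (min_le_right d N)⟩
  rw [planeExt_apply] at this
  simpa [hj] using this

lemma range_planeExt (N d : ℕ) : LinearMap.range (planeExt N d) = plane N d := by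
  ext x
  constructor
  · rintro ⟨c, rfl⟩ i hi
    rw [planeExt_apply]
    have : ¬ ((i : ℕ) < min d N) := by omega
    simp [this]
  · intro hx
    refine ⟨fun j => x ⟨(j : ℕ), lt_of_lt_of_le j.2 (min_le_right d N)⟩, ?_⟩
    funext i
    rw [planeExt_apply]
    split
    · rfl
    · exact (hx i (by omega)).symm

lemma finrank_plane (N d : ℕ) : finrank ℝ (plane N d) = min d N := by
  rw [← range_planeExt, LinearMap.finrank_range_of_inj (planeExt_injective N d)]
  simp

lemma mem_plane_iff_eq_ext {N d : ℕ} {x : Fin N → ℝ} :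
    x ∈ plane N d ↔ planeExt N d (fun j => x ⟨(j : ℕ), lt_of_lt_of_le j.2 (min_le_right d N)⟩) = x := by
  constructor
  · intro hx
    funext i
    rw [planeExt_apply]
    split
    · rfl
    · exact (hx i (by omega)).symm
  · intro h
    rw [← h]
    rw [← range_planeExt]
    exact ⟨_, rfl⟩

/-- Decomposition of a vector in `ℝ^{n+k}` into first and last coordinates. -/
lemma append_proj {n k : ℕ} (x : Fin (n + k) → ℝ) :
    Fin.append (fun i => x (Fin.castAdd k i)) (fun j => x (Fin.natAdd n j)) = x := by
  funext i
  refine Fin.addCases (fun i => ?_) (fun j => ?_) i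
  · rw [Fin.append_left]
  · rw [Fin.append_right]



variable {E F : Type*} [NormedAddCommGroup E] [NormedSpace ℝ E]
  [NormedAddCommGroup F] [NormedSpace ℝ F]

/-- A C¹ chart pair between open sets. -/
def IsChart (U : Set E) (V : Set F) (φ : E → F) (ψ : F → E) : Prop :=
  IsOpen U ∧ IsOpen V ∧ ContDiffOn ℝ 1 φ U ∧ ContDiffOn ℝ 1 ψ V ∧
  (∀ x ∈ U, φ x ∈ V) ∧ (∀ v ∈ V, ψ v ∈ U) ∧
  (∀ x ∈ U, ψ (φ x) = x) ∧ (∀ v ∈ V, φ (ψ v) = v)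

lemma isChart_shrink {U : Set E} {V : Set F} {φ : E → F} {ψ : F → E}
    (h : IsChart U V φ ψ) {W : Set E} (hW : IsOpen W) :
    IsChart (U ∩ W) (V ∩ ψ ⁻¹' (U ∩ W)) φ ψ := by
  obtain ⟨hU, hV, hφ, hψ, hUV, hVU, hψφ, hφψ⟩ := h
  have hV' : IsOpen (V ∩ ψ ⁻¹' (U ∩ W)) :=
    ContinuousOn.isOpen_inter_preimage (hψ.continuousOn) hV (hU.inter hW)
  refine ⟨hU.inter hW, hV', hφ.mono inter_subset_left, hψ.mono inter_subset_left,
    ?_, ?_, fun x hx => hψφ x hx.1, fun v hv => hφψ v hv.1⟩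
  · rintro x ⟨hx, hxW⟩
    exact ⟨hUV x hx, by rw [mem_preimage, hψφ x hx]; exact ⟨hx, hxW⟩⟩
  · rintro v ⟨hv, hv'⟩
    exact hv'

lemma isChart_image_inter {U : Set E} {V : Set F} {φ : E → F} {ψ : F → E}
    (h : IsChart U V φ ψ) {S : Set E} {P : Set F}
    (hiff : ∀ x ∈ U, (x ∈ S ↔ φ x ∈ P)) :
    φ '' (U ∩ S) = V ∩ P := by
  obtain ⟨hU, hV, hφ, hψ, hUV, hVU, hψφ, hφψ⟩ := h
  ext v
  constructor
  · rintro ⟨x, ⟨hxU, hxS⟩, rfl⟩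
    exact ⟨hUV x hxU, (hiff x hxU).1 hxS⟩
  · rintro ⟨hvV, hvP⟩
    refine ⟨ψ v, ⟨hVU v hvV, ?_⟩, hφψ v hvV⟩
    rw [hiff _ (hVU v hvV), hφψ v hvV]
    exact hvP

lemma isChart_of_ift [CompleteSpace E] {f : E → F} {f' : E ≃L[ℝ] F} {a : E}
    (hf : ContDiffAt ℝ 1 f a) (hd : HasFDerivAt f (f' : E →L[ℝ] F) a) :
    ∃ U V g, IsChart U V f g ∧ a ∈ U := by
  set P := hf.toOpenPartialHomeomorph f hd one_ne_zero with hP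
  have hcoe : (P : E → F) = f := ContDiffAt.toOpenPartialHomeomorph_coe hf hd one_ne_zero
  have haP : a ∈ P.source := hf.mem_toOpenPartialHomeomorph_source hd one_ne_zero
  have hfaP : f a ∈ P.target := hf.image_mem_toOpenPartialHomeomorph_target hd one_ne_zero
  have hg : ContDiffAt ℝ 1 (P.symm) (f a) := hf.to_localInverse hd one_ne_zero
  obtain ⟨t, htmem, htf⟩ : ∃ t ∈ nhds a, ContDiffOn ℝ 1 f t :=
    hf.contDiffOn le_rfl (by simp)
  obtain ⟨s, hsmem, hsg⟩ : ∃ s ∈ nhds (f a), ContDiffOn ℝ 1 (P.symm) s :=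
    hg.contDiffOn le_rfl (by simp)
  set Y : Set E := P.source ∩ interior t with hY
  set X : Set F := P.target ∩ interior s with hX
  have hYo : IsOpen Y := P.open_source.inter isOpen_interior
  have hXo : IsOpen X := P.open_target.inter isOpen_interior
  set V : Set F := X ∩ (P.symm) ⁻¹' Y with hVdef
  have hVo : IsOpen V :=
    ContinuousOn.isOpen_inter_preimage (P.symm.continuousOn.mono inter_subset_left) hXo hYo
  set U : Set E := Y ∩ f ⁻¹' V with hUdef
  have hUo : IsOpen U := by
    refine ContinuousOn.isOpen_inter_preimage ?_ hYo hVo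
    exact (htf.continuousOn.mono interior_subset).mono inter_subset_right
  have hUsrc : ∀ x ∈ U, x ∈ P.source := fun x hx => hx.1.1
  have hVtgt : ∀ v ∈ V, v ∈ P.target := fun v hv => hv.1.1
  have hfP : ∀ x ∈ P.source, f x = P x := fun x _ => by rw [hcoe]
  refine ⟨U, V, P.symm, ⟨hUo, hVo, htf.mono (fun x hx => interior_subset hx.1.2),
    hsg.mono (fun v hv => interior_subset hv.1.2), ?_, ?_, ?_, ?_⟩, ?_⟩
  · exact fun x hx => hx.2
  · rintro v ⟨⟨hvt, hvs⟩, hvY⟩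
    refine ⟨hvY, ?_⟩
    rw [mem_preimage, hfP _ hvY.1, P.right_inv hvt]
    exact ⟨⟨hvt, hvs⟩, hvY⟩
  · intro x hx
    rw [hfP _ (hUsrc x hx)]
    exact P.left_inv (hUsrc x hx)
  · intro v hv
    rw [hfP _ hv.2.1, P.right_inv (hVtgt v hv)]
  · refine ⟨⟨haP, mem_interior_iff_mem_nhds.2 htmem⟩, ?_⟩
    rw [mem_preimage]
    refine ⟨⟨hfaP, mem_interior_iff_mem_nhds.2 hsmem⟩, ?_⟩
    rw [mem_preimage, hfP a haP, P.left_inv haP]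
    exact ⟨haP, mem_interior_iff_mem_nhds.2 htmem⟩




/-- A coordinate model for a subspace `S` of `ℝ^a` of rank `m`. -/
lemma exists_model {a m : ℕ} (S : Submodule ℝ (Fin a → ℝ)) (hm : finrank ℝ S = m) :
    ∃ (ι : (Fin m → ℝ) →ₗ[ℝ] (Fin a → ℝ)) (π : (Fin a → ℝ) →ₗ[ℝ] (Fin m → ℝ)),
      LinearMap.range ι = S ∧ (∀ u, π (ι u) = u) ∧ (∀ x ∈ S, ι (π x) = x) := by
  have : FiniteDimensional ℝ (↥S) := inferInstance
  let b : Basis (Fin m) ℝ ↥S := Module.finBasisOfFinrankEq ℝ ↥S hm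
  obtain ⟨C, hC⟩ := Submodule.exists_isCompl S
  let prj := S.linearProjOfIsCompl C hC
  refine ⟨S.subtype ∘ₗ (b.equivFun.symm : (Fin m → ℝ) ≃ₗ[ℝ] ↥S),
    (b.equivFun : ↥S ≃ₗ[ℝ] (Fin m → ℝ)) ∘ₗ prj, ?_, ?_, ?_⟩
  · rw [LinearMap.range_comp]
    simp [Submodule.range_subtype]
  · intro u
    show b.equivFun (prj ↑(b.equivFun.symm u)) = u
    rw [show prj ↑(b.equivFun.symm u) = b.equivFun.symm u from
      Submodule.linearProjOfIsCompl_apply_left hC _, LinearEquiv.apply_symm_apply]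
  · intro x hx
    show ↑(b.equivFun.symm (b.equivFun (prj x))) = x
    rw [LinearEquiv.symm_apply_apply]
    have hpr : prj x = ⟨x, hx⟩ := Submodule.linearProjOfIsCompl_apply_left hC ⟨x, hx⟩
    rw [hpr]

/-- If the rank of the image of `S` under `f` equals the rank of `S`, then `f` is
injective on `S`. -/
lemma inj_on_of_finrank_map {a b' : ℕ} (f : (Fin a → ℝ) →ₗ[ℝ] (Fin b' → ℝ))
    (S : Submodule ℝ (Fin a → ℝ)) (h : finrank ℝ (S.map f) = finrank ℝ S) :
    ∀ x ∈ S, f x = 0 → x = 0 := by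
  intro x hx hfx
  let g := f.domRestrict S
  have hrange : LinearMap.range g = S.map f := by simp [g, LinearMap.range_domRestrict]
  have hrn := g.finrank_range_add_finrank_ker
  rw [hrange, h] at hrn
  have hker : finrank ℝ (LinearMap.ker g) = 0 := by omega
  have : LinearMap.ker g = ⊥ := Submodule.finrank_eq_zero.mp hker
  have hgx : g ⟨x, hx⟩ = 0 := hfx
  have : (⟨x, hx⟩ : ↥S) ∈ LinearMap.ker g := hgx
  rw [‹LinearMap.ker g = ⊥›] at this
  simpa using congrArg Subtype.val this

/-- An independent family inside a submodule bounds its rank from below. -/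
lemma le_finrank_of_linearIndependent {a l : ℕ} {P : Submodule ℝ (Fin a → ℝ)}
    {v : Fin l → (Fin a → ℝ)} (hv : ∀ i, v i ∈ P) (hli : LinearIndependent ℝ v) :
    l ≤ finrank ℝ P := by
  have : LinearIndependent ℝ (fun i => (⟨v i, hv i⟩ : ↥P)) := by
    apply LinearIndependent.of_comp P.subtype
    exact hli
  simpa using this.fintype_card_le_finrank

/-- The splitting `ℝ^k ≃ ℝ^m × ℝ^{k-m}` (for `m ≤ k`), matching the plane. -/
noncomputable def splitEquiv (k m : ℕ) (h : m ≤ k) :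
    (Fin k → ℝ) ≃ₗ[ℝ] (Fin m → ℝ) × (Fin (k - m) → ℝ) :=
  (LinearEquiv.funCongrLeft ℝ ℝ ((finSumFinEquiv.trans (finCongr (by omega))).symm)).symm.trans
    (LinearEquiv.sumArrowLequivProdArrow _ _ ℝ ℝ)

lemma splitEquiv_fst {k m : ℕ} (h : m ≤ k) (w : Fin k → ℝ) (j : Fin m) :
    (splitEquiv k m h w).1 j = w (Fin.castLE h j) := by
  simp only [splitEquiv, LinearEquiv.trans_apply, LinearEquiv.sumArrowLequivProdArrow_apply_fst]
  show w _ = _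
  congr 1

lemma splitEquiv_snd {k m : ℕ} (h : m ≤ k) (w : Fin k → ℝ) (j : Fin (k - m)) :
    (splitEquiv k m h w).2 j = w ⟨m + (j : ℕ), by omega⟩ := by
  simp only [splitEquiv, LinearEquiv.trans_apply, LinearEquiv.sumArrowLequivProdArrow_apply_snd]
  show w _ = _
  congr 1

lemma splitEquiv_snd_eq_zero_iff {k m : ℕ} (h : m ≤ k) (w : Fin k → ℝ) :
    (splitEquiv k m h w).2 = 0 ↔ w ∈ plane k m := by
  constructor
  · intro hz i hi
    have hik : (i : ℕ) - m < k - m := by omega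
    have := congrFun hz ⟨(i : ℕ) - m, hik⟩
    rw [splitEquiv_snd] at this
    have hieq : (⟨m + ((i : ℕ) - m), by omega⟩ : Fin k) = i := by
      ext; simp; omega
    rw [hieq] at this
    exact this
  · intro hw
    funext j
    rw [splitEquiv_snd]
    exact hw _ (by simp)





lemma tangent_eq_chart {N d : ℕ} {M : Set (Fin N → ℝ)} {U V : Set (Fin N → ℝ)}
    {φ ψ : (Fin N → ℝ) → (Fin N → ℝ)}
    (hU : IsOpen U) (hV : IsOpen V)
    (hφ : ContDiffOn ℝ 1 φ U) (hψ : ContDiffOn ℝ 1 ψ V)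
    (hψφ : ∀ z ∈ U, ψ (φ z) = z)
    (himg : φ '' (U ∩ M) = V ∩ (plane N d : Set _))
    {x : Fin N → ℝ} (hx : x ∈ U ∩ M) :
    tangentSpaceAt N M x =
      (plane N d).map (fderiv ℝ ψ (φ x) : (Fin N → ℝ) →ₗ[ℝ] (Fin N → ℝ)) := by
  have hφdiff : ∀ z ∈ U, DifferentiableAt ℝ φ z := fun z hz =>
    ((hφ.differentiableOn one_ne_zero).differentiableAt (hU.mem_nhds hz))
  have hψdiff : ∀ p ∈ V, DifferentiableAt ℝ ψ p := fun p hp =>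
    ((hψ.differentiableOn one_ne_zero).differentiableAt (hV.mem_nhds hp))
  set p := φ x with hp
  have hpVD : p ∈ V ∩ (plane N d : Set _) := by
    rw [← himg]; exact mem_image_of_mem φ hx
  have hψx : ψ p = x := hψφ x hx.1
  apply le_antisymm
  · -- span ≤ map
    rw [tangentSpaceAt, Submodule.span_le]
    rintro v ⟨γ, hγ0, hγM, hγd⟩
    have hcont : ContinuousAt γ 0 := hγd.continuousAt
    have evU : ∀ᶠ t in nhds (0:ℝ), γ t ∈ U :=
      hcont.eventually_mem (hU.mem_nhds (by rw [hγ0]; exact hx.1))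
    set B := fderiv ℝ φ x with hB
    have hder : HasDerivAt (fun t => φ (γ t)) (B v) 0 := by
      have hF : HasFDerivAt φ (fderiv ℝ φ x) (γ 0) := hγ0 ▸ (hφdiff x hx.1).hasFDerivAt
      exact hF.comp_hasDerivAt 0 hγd
    have hevD : ∀ᶠ t in nhds (0:ℝ), φ (γ t) ∈ (plane N d : Set _) := by
      filter_upwards [evU, hγM] with t h1 h2
      have : φ (γ t) ∈ V ∩ (plane N d : Set _) := by
        rw [← himg]; exact mem_image_of_mem φ ⟨h1, h2⟩
      exact this.2
    have hBv : B v ∈ plane N d := by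
      have hclosed : IsClosed (plane N d : Set (Fin N → ℝ)) :=
        Submodule.closed_of_finiteDimensional _
      rw [hasDerivAt_iff_tendsto_slope] at hder
      refine hclosed.mem_of_tendsto hder ?_
      have h0 : φ (γ 0) ∈ plane N d := by rw [hγ0]; exact hpVD.2
      refine eventually_nhdsWithin_of_eventually_nhds ?_
      filter_upwards [hevD] with t ht
      rw [slope_def_module]
      exact (plane N d).smul_mem _ ((plane N d).sub_mem ht h0)
    have hvAB : (fderiv ℝ ψ p) (B v) = v := by
      have hev_id : (fun z => ψ (φ z)) =ᶠ[nhds x] id :=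
        eventually_of_mem (hU.mem_nhds hx.1) hψφ
      have h1 : fderiv ℝ (fun z => ψ (φ z)) x = ContinuousLinearMap.id ℝ _ :=
        hev_id.fderiv_eq.trans fderiv_id
      have h2 : fderiv ℝ (ψ ∘ φ) x = (fderiv ℝ ψ p).comp B :=
        fderiv_comp x (hψdiff p hpVD.1) (hφdiff x hx.1)
      have h3 : fderiv ℝ (fun z => ψ (φ z)) x = (fderiv ℝ ψ p).comp B := h2
      rw [h1] at h3
      exact (congrArg (fun (L : (Fin N → ℝ) →L[ℝ] (Fin N → ℝ)) => L v) h3.symm)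
    exact ⟨B v, hBv, hvAB⟩
  · -- map ≤ span
    rw [Submodule.map_le_iff_le_comap]
    intro w hw
    set γ : ℝ → (Fin N → ℝ) := fun t => ψ (p + t • w) with hγ
    have hc : HasDerivAt (fun t : ℝ => p + t • w) w 0 := by
      have h1 : HasDerivAt (fun t : ℝ => t • w) ((1:ℝ) • w) 0 :=
        (hasDerivAt_id 0).smul_const w
      rw [one_smul] at h1
      exact h1.const_add p
    have hline : ∀ t : ℝ, p + t • w ∈ plane N d := fun t =>
      (plane N d).add_mem hpVD.2 ((plane N d).smul_mem t hw)
    have evV : ∀ᶠ t in nhds (0:ℝ), p + t • w ∈ V := by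
      have htd : Filter.Tendsto (fun t : ℝ => p + t • w) (nhds 0) (nhds p) := by
        have := hc.continuousAt.tendsto
        simpa using this
      exact htd.eventually_mem (hV.mem_nhds hpVD.1)
    have hmem : ∀ᶠ t in nhds (0:ℝ), γ t ∈ M := by
      filter_upwards [evV] with t ht
      have : p + t • w ∈ V ∩ (plane N d : Set _) := ⟨ht, hline t⟩
      rw [← himg] at this
      obtain ⟨x', hx', hq⟩ := this
      have : γ t = x' := by rw [hγ]; simp only; rw [← hq, hψφ x' hx'.1]
      rw [this]; exact hx'.2
    have hγ0 : γ 0 = x := by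
      simp only [hγ, zero_smul, add_zero]
      exact hψx
    have hd : HasDerivAt γ ((fderiv ℝ ψ p) w) 0 := by
      have hF : HasFDerivAt ψ (fderiv ℝ ψ p) (p + (0:ℝ) • w) := by
        simpa using (hψdiff p hpVD.1).hasFDerivAt
      exact hF.comp_hasDerivAt 0 hc
    exact Submodule.subset_span ⟨γ, hγ0, hmem, hd⟩



lemma planeExt_mem (N d : ℕ) (c : Fin (min d N) → ℝ) : planeExt N d c ∈ plane N d := by
  rw [← range_planeExt]; exact ⟨c, rfl⟩

lemma castLE_planeExt (N d : ℕ) (c : Fin (min d N) → ℝ) (j : Fin (min d N)) :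
    planeExt N d c (Fin.castLE (min_le_right d N) j) = c j := by
  rw [planeExt_apply]
  rw [dif_pos (show ((Fin.castLE (min_le_right d N) j : Fin N) : ℕ) < min d N from j.2)]
  exact congrArg c (Fin.ext (by simp))

lemma planeExt_restrict {N d : ℕ} {x : Fin N → ℝ} (hx : x ∈ plane N d) :
    planeExt N d (fun j => x (Fin.castLE (min_le_right d N) j)) = x :=
  mem_plane_iff_eq_ext.mp hx

lemma funLeft_castAdd_append {n k : ℕ} (a : Fin n → ℝ) (b : Fin k → ℝ) :
    LinearMap.funLeft ℝ ℝ (Fin.castAdd k) (Fin.append a b) = a :=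
  funext fun i => Fin.append_left a b i

lemma funLeft_natAdd_append {n k : ℕ} (a : Fin n → ℝ) (b : Fin k → ℝ) :
    LinearMap.funLeft ℝ ℝ (Fin.natAdd n) (Fin.append a b) = b :=
  funext fun i => Fin.append_right a b i

lemma append_funLeft {n k : ℕ} (x : Fin (n + k) → ℝ) :
    Fin.append (LinearMap.funLeft ℝ ℝ (Fin.castAdd k) x) (LinearMap.funLeft ℝ ℝ (Fin.natAdd n) x)
      = x := by
  funext i
  refine Fin.addCases (fun i => ?_) (fun j => ?_) i
  · rw [Fin.append_left]; rfl
  · rw [Fin.append_right]; rfl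

lemma eq_zero_of_funLeft {n k : ℕ} {x : Fin (n + k) → ℝ}
    (h1 : LinearMap.funLeft ℝ ℝ (Fin.castAdd k) x = 0)
    (h2 : LinearMap.funLeft ℝ ℝ (Fin.natAdd n) x = 0) : x = 0 := by
  rw [← append_funLeft x, h1, h2]
  funext i
  refine Fin.addCases (fun i => ?_) (fun j => ?_) i
  · rw [Fin.append_left]; rfl
  · rw [Fin.append_right]; rfl

lemma continuous_append_right {n k : ℕ} (a : Fin n → ℝ) :
    Continuous fun b : Fin k → ℝ => Fin.append a b := by
  apply continuous_pi
  intro i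
  refine Fin.addCases (motive := fun i => Continuous fun b : Fin k → ℝ => Fin.append a b i)
    (fun i => ?_) (fun j => ?_) i
  · simp only [Fin.append_left]; exact continuous_const
  · simp only [Fin.append_right]; exact continuous_apply j

lemma eq_zero_pair_of_isCompl {k : ℕ} {R Q : Submodule ℝ (Fin k → ℝ)} (h : IsCompl R Q)
    {r q : Fin k → ℝ} (hr : r ∈ R) (hq : q ∈ Q) (hrq : r + q = 0) : r = 0 ∧ q = 0 := by
  have hrQ : r ∈ Q := by
    have : r = -q := by linear_combination (norm := module) hrq
    rw [this]; exact Q.neg_mem hq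
  have hr0 : r = 0 := Submodule.disjoint_def.mp h.disjoint r hr hrQ
  refine ⟨hr0, ?_⟩
  rw [hr0, zero_add] at hrq
  exact hrq

lemma const_on_ball_of_fderiv_zero {E F : Type*} [NormedAddCommGroup E] [NormedSpace ℝ E]
    [NormedAddCommGroup F] [NormedSpace ℝ F] {f : E → F} {c : E} {ε : ℝ}
    (hd : ∀ x ∈ Metric.ball c ε, HasFDerivAt f (0 : E →L[ℝ] F) x) :
    ∀ x ∈ Metric.ball c ε, f x = f c := by
  intro x hx
  have hε : 0 < ε := by
    by_contra h
    have := Metric.mem_ball.mp hx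
    have := dist_nonneg (x := x) (y := c)
    linarith
  apply (convex_ball c ε).is_const_of_fderivWithin_eq_zero
    (fun z hz => ((hd z hz).differentiableAt).differentiableWithinAt) ?_ hx
    (Metric.mem_ball_self hε)
  intro z hz
  rw [fderivWithin_of_isOpen Metric.isOpen_ball hz]
  exact (hd z hz).fderiv





lemma IsChart.symm {E F : Type*} [NormedAddCommGroup E] [NormedSpace ℝ E]
    [NormedAddCommGroup F] [NormedSpace ℝ F] {U : Set E} {V : Set F} {φ : E → F} {ψ : F → E}
    (h : IsChart U V φ ψ) : IsChart V U ψ φ :=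
  ⟨h.2.1, h.1, h.2.2.2.1, h.2.2.1, h.2.2.2.2.2.1, h.2.2.2.2.1,
    h.2.2.2.2.2.2.2, h.2.2.2.2.2.2.1⟩

set_option maxHeartbeats 4000000 in
/-- If `Π_n` restricted to the `d`-dimensional C¹ submanifold `M ⊆ ℝ^{n+k}` has
constant rank `l`, then every fiber of `Π_n` over `Π_n(M)` is a `(d−l)`-dimensional
C¹ submanifold of `ℝ^k`. -/
theorem fiber_isC1Submanifold (n k d l : ℕ) (hnk : 1 ≤ n + k)
    (M : Set (Fin (n + k) → ℝ)) (hM : IsC1Submanifold (n + k) d M)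
    (hrank : ∀ z ∈ M,
      Module.finrank ℝ ((tangentSpaceAt (n + k) M z).map (projFst n k)) = l) :
    ∀ y ∈ (projFst n k) '' M,
      IsC1Submanifold k (d - l) {z : Fin k → ℝ | Fin.append y z ∈ M} := by
  classical
  intro y _hy z₀ hz₀
  simp only [Set.mem_setOf_eq] at hz₀
  obtain ⟨U, V, φ, ψ, hU, hV, hx₀U, hφ, hψ, hUV, hVU, hψφ, hφψ, himg0⟩ := hM _ hz₀
  set x₀ : Fin (n + k) → ℝ := Fin.append y z₀ with hx₀def
  have himg : φ '' (U ∩ M) = V ∩ ↑(plane (n + k) d) := himg0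
  -- linear maps
  set πA : (Fin (n + k) → ℝ) →L[ℝ] (Fin n → ℝ) := (projFst n k).toContinuousLinearMap with hπAdef
  set πB : (Fin (n + k) → ℝ) →L[ℝ] (Fin k → ℝ) :=
    (LinearMap.funLeft ℝ ℝ (Fin.natAdd n)).toContinuousLinearMap with hπBdef
  set ι : (Fin (min d (n + k)) → ℝ) →L[ℝ] (Fin (n + k) → ℝ) :=
    (planeExt (n + k) d).toContinuousLinearMap with hιdef
  set ρ : (Fin (n + k) → ℝ) →L[ℝ] (Fin (min d (n + k)) → ℝ) :=
    (LinearMap.funLeft ℝ ℝ (Fin.castLE (min_le_right d (n + k)))).toContinuousLinearMap with hρdef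
  have hιmem : ∀ c, ι c ∈ plane (n + k) d := fun c => planeExt_mem _ _ c
  have hιρ : ∀ x ∈ plane (n + k) d, ι (ρ x) = x := fun x hx => planeExt_restrict hx
  -- chart base point data
  set p₀ := φ x₀ with hp₀def
  have hp₀VD : p₀ ∈ V ∩ ↑(plane (n + k) d) := by
    rw [← himg]; exact Set.mem_image_of_mem φ ⟨hx₀U, hz₀⟩
  have hψp₀ : ψ p₀ = x₀ := hψφ x₀ hx₀U
  set c₀ : Fin (min d (n + k)) → ℝ := ρ p₀ with hc₀def
  have hιc₀ : ι c₀ = p₀ := hιρ p₀ hp₀VD.2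
  have hψVD : ∀ p, p ∈ V → p ∈ plane (n + k) d → ψ p ∈ U ∩ M := by
    intro p hpV hpD
    have hmem : p ∈ φ '' (U ∩ M) := by rw [himg]; exact ⟨hpV, hpD⟩
    obtain ⟨x', hx', rfl⟩ := hmem
    rw [hψφ x' hx'.1]; exact hx'
  -- differentiability
  have hψdiff : ∀ p ∈ V, DifferentiableAt ℝ ψ p := fun p hp =>
    (hψ.differentiableOn one_ne_zero).differentiableAt (hV.mem_nhds hp)
  have hφdiff : ∀ x ∈ U, DifferentiableAt ℝ φ x := fun x hx =>
    (hφ.differentiableOn one_ne_zero).differentiableAt (hU.mem_nhds hx)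
  have hψcd : ∀ p ∈ V, ContDiffAt ℝ 1 ψ p := fun p hp => hψ.contDiffAt (hV.mem_nhds hp)
  -- the parametrization g
  set g : (Fin (min d (n + k)) → ℝ) → (Fin (n + k) → ℝ) := fun c => ψ (ι c) with hgdef
  set g₁ : (Fin (min d (n + k)) → ℝ) → (Fin n → ℝ) := fun c => πA (g c) with hg₁def
  set g₂ : (Fin (min d (n + k)) → ℝ) → (Fin k → ℝ) := fun c => πB (g c) with hg₂def
  set W : Set (Fin (min d (n + k)) → ℝ) := ι ⁻¹' V with hWdef
  have hWopen : IsOpen W := hV.preimage ι.continuous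
  have hc₀W : c₀ ∈ W := by
    show ι c₀ ∈ V
    rw [hιc₀]; exact hp₀VD.1
  set Dg : (Fin (min d (n + k)) → ℝ) → ((Fin (min d (n + k)) → ℝ) →L[ℝ] (Fin (n + k) → ℝ)) :=
    fun c => (fderiv ℝ ψ (ι c)).comp ι with hDgdef
  have hg_fd : ∀ c ∈ W, HasFDerivAt g (Dg c) c := fun c hc =>
    ((hψdiff _ hc).hasFDerivAt).comp c ι.hasFDerivAt
  set Dg₁ : (Fin (min d (n + k)) → ℝ) → ((Fin (min d (n + k)) → ℝ) →L[ℝ] (Fin n → ℝ)) :=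
    fun c => πA.comp (Dg c) with hDg₁def
  set Dg₂ : (Fin (min d (n + k)) → ℝ) → ((Fin (min d (n + k)) → ℝ) →L[ℝ] (Fin k → ℝ)) :=
    fun c => πB.comp (Dg c) with hDg₂def
  have hg₁_fd : ∀ c ∈ W, HasFDerivAt g₁ (Dg₁ c) c := fun c hc =>
    (πA.hasFDerivAt).comp c (hg_fd c hc)
  have hg₂_fd : ∀ c ∈ W, HasFDerivAt g₂ (Dg₂ c) c := fun c hc =>
    (πB.hasFDerivAt).comp c (hg_fd c hc)
  have hgW : ∀ c ∈ W, g c ∈ U ∩ M := fun c hc => hψVD _ hc (hιmem c)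
  have hφg : ∀ c ∈ W, φ (g c) = ι c := fun c hc => hφψ _ hc
  have hgc₀ : g c₀ = x₀ := by
    show ψ (ι c₀) = x₀
    rw [hιc₀]; exact hψp₀
  have hg₁c₀ : g₁ c₀ = y := by
    show πA (g c₀) = y
    rw [hgc₀]
    exact funLeft_castAdd_append y z₀
  have hg₂c₀ : g₂ c₀ = z₀ := by
    show πB (g c₀) = z₀
    rw [hgc₀]
    exact funLeft_natAdd_append y z₀
  -- constant rank hypothesis in terms of Dg₁
  have hrank' : ∀ c ∈ W, finrank ℝ
      (LinearMap.range ((Dg₁ c : (Fin (min d (n + k)) → ℝ) →ₗ[ℝ] (Fin n → ℝ)))) = l := by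
    intro c hc
    have hgcUM := hgW c hc
    have ht := tangent_eq_chart hU hV hφ hψ hψφ himg hgcUM
    rw [hφg c hc] at ht
    have hr := hrank _ hgcUM.2
    rw [ht] at hr
    rw [← range_planeExt (n + k) d, ← LinearMap.range_comp, ← LinearMap.range_comp] at hr
    have hD1coe : ((Dg₁ c : (Fin (min d (n + k)) → ℝ) →ₗ[ℝ] (Fin n → ℝ)))
        = (projFst n k) ∘ₗ (((fderiv ℝ ψ (ι c) : (Fin (n+k) → ℝ) →ₗ[ℝ] (Fin (n+k) → ℝ)))
            ∘ₗ (planeExt (n + k) d)) := by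
      ext1 v; rfl
    rw [hD1coe]
    exact hr
  -- kernel and range at the base point
  set L : Submodule ℝ (Fin n → ℝ) :=
    LinearMap.range ((Dg₁ c₀ : (Fin (min d (n + k)) → ℝ) →ₗ[ℝ] (Fin n → ℝ))) with hLdef
  set K : Submodule ℝ (Fin (min d (n + k)) → ℝ) :=
    LinearMap.ker ((Dg₁ c₀ : (Fin (min d (n + k)) → ℝ) →ₗ[ℝ] (Fin n → ℝ))) with hKdef
  set m : ℕ := finrank ℝ K with hmdef
  have hrankc₀ : finrank ℝ L = l := hrank' c₀ hc₀W
  have hδml : l + m = min d (n + k) := by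
    have hrn := LinearMap.finrank_range_add_finrank_ker
      ((Dg₁ c₀ : (Fin (min d (n + k)) → ℝ) →ₗ[ℝ] (Fin n → ℝ)))
    have hfin : finrank ℝ (Fin (min d (n + k)) → ℝ) = min d (n + k) := Module.finrank_fin_fun ℝ
    rw [hfin] at hrn
    have h1 : finrank ℝ L + finrank ℝ K = min d (n + k) := hrn
    rw [hrankc₀, ← hmdef] at h1
    exact h1
  have hln : l ≤ n := by
    rw [← hrankc₀]
    have := L.finrank_le
    rwa [Module.finrank_fin_fun] at this
  -- coordinate models for K and L
  obtain ⟨κ, πK, hκrange, hπκ, hκπ⟩ := exists_model K hmdef.symm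
  obtain ⟨lL, πL, hlrange, hπl, hlπ⟩ := exists_model L hrankc₀
  set πKc : (Fin (min d (n + k)) → ℝ) →L[ℝ] (Fin m → ℝ) := πK.toContinuousLinearMap with hπKc
  set πLc : (Fin n → ℝ) →L[ℝ] (Fin l → ℝ) := πL.toContinuousLinearMap with hπLc
  -- the straightening map F
  set F : (Fin (min d (n + k)) → ℝ) → (Fin m → ℝ) × (Fin l → ℝ) :=
    fun c => (πKc (c - c₀), πLc (g₁ c - y)) with hFdef
  have hFc₀ : F c₀ = 0 := by
    show (πKc (c₀ - c₀), πLc (g₁ c₀ - y)) = 0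
    rw [hg₁c₀, sub_self, sub_self, map_zero, map_zero]
    rfl
  set DF : (Fin (min d (n + k)) → ℝ) →
      ((Fin (min d (n + k)) → ℝ) →L[ℝ] (Fin m → ℝ) × (Fin l → ℝ)) :=
    fun c => πKc.prod (πLc.comp (Dg₁ c)) with hDFdef
  have hF_fd : ∀ c ∈ W, HasFDerivAt F (DF c) c := by
    intro c hc
    have h1 : HasFDerivAt (fun c' => πKc (c' - c₀)) πKc c := by
      have heq : (fun c' : Fin (min d (n + k)) → ℝ => πKc (c' - c₀))
          = fun c' => πKc c' - πKc c₀ := funext fun c' => map_sub πKc c' c₀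
      rw [heq]
      exact (πKc.hasFDerivAt).sub_const (πKc c₀)
    have h2 : HasFDerivAt (fun c' => πLc (g₁ c' - y)) (πLc.comp (Dg₁ c)) c :=
      (πLc.hasFDerivAt).comp c ((hg₁_fd c hc).sub_const y)
    exact h1.prodMk h2
  have hDFc₀inj : Function.Injective (DF c₀) := by
    have hz : ∀ v, DF c₀ v = 0 → v = 0 := by
      intro v hv
      have h1 : πKc v = 0 := congrArg Prod.fst hv
      have h2 : πLc ((Dg₁ c₀) v) = 0 := congrArg Prod.snd hv
      have hvL : (Dg₁ c₀) v ∈ L := LinearMap.mem_range_self _ v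
      have h3 : (Dg₁ c₀) v = 0 := by
        have := hlπ _ hvL
        rw [show πL ((Dg₁ c₀) v) = 0 from h2, map_zero] at this
        exact this.symm
      have hvK : v ∈ K := h3
      have := hκπ v hvK
      rw [show πK v = 0 from h1, map_zero] at this
      exact this.symm
    intro a b hab
    have h := hz _ (by rw [map_sub, hab, sub_self] :
      DF c₀ (a - b) = 0)
    exact sub_eq_zero.mp h
    -- F is C¹ at c₀
  have hgcd : ∀ c ∈ W, ContDiffAt ℝ 1 g c := fun c hc =>
    (hψcd _ hc).comp c (ι.contDiff.contDiffAt)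
  have hFcd : ContDiffAt ℝ 1 F c₀ := by
    have h1 : ContDiffAt ℝ 1 (fun c' => πKc (c' - c₀)) c₀ :=
      (πKc.contDiff.contDiffAt).comp c₀ ((contDiff_id.sub contDiff_const).contDiffAt)
    have h2 : ContDiffAt ℝ 1 (fun c' => πLc (g₁ c' - y)) c₀ := by
      have hg₁cd : ContDiffAt ℝ 1 g₁ c₀ := (πA.contDiff.contDiffAt).comp c₀ (hgcd c₀ hc₀W)
      exact (πLc.contDiff.contDiffAt).comp c₀ (hg₁cd.sub contDiffAt_const)
    exact h1.prodMk h2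
  have hfinrankeq : finrank ℝ (Fin (min d (n + k)) → ℝ)
      = finrank ℝ ((Fin m → ℝ) × (Fin l → ℝ)) := by
    rw [Module.finrank_fin_fun ℝ, Module.finrank_prod, Module.finrank_fin_fun ℝ,
      Module.finrank_fin_fun ℝ]
    omega
  set EF := (((DF c₀) : (Fin (min d (n + k)) → ℝ) →ₗ[ℝ]
      ((Fin m → ℝ) × (Fin l → ℝ))).linearEquivOfInjective hDFc₀inj
      hfinrankeq).toContinuousLinearEquiv with hEFdef
  have hF_fd_EF : HasFDerivAt F
      (EF : (Fin (min d (n + k)) → ℝ) →L[ℝ] ((Fin m → ℝ) × (Fin l → ℝ))) c₀ := by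
    have heq : (EF : (Fin (min d (n + k)) → ℝ) →L[ℝ] ((Fin m → ℝ) × (Fin l → ℝ)))
        = DF c₀ := ContinuousLinearMap.ext fun v => rfl
    rw [heq]
    exact hF_fd c₀ hc₀W
  obtain ⟨SF0, TF0, Finv, hFchart0, hc₀SF0⟩ := isChart_of_ift hFcd hF_fd_EF
  have hFchart := isChart_shrink hFchart0 hWopen
  set SF := SF0 ∩ W with hSFdef
  set TF := TF0 ∩ Finv ⁻¹' (SF0 ∩ W) with hTFdef
  obtain ⟨hSFo, hTFo, hFcdOn, hFinvcdOn, hFmaps, hFinvmaps, hFinvF, hFFinv⟩ := hFchart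
  have hc₀SF : c₀ ∈ SF := ⟨hc₀SF0, hc₀W⟩
  have h0TF : (0 : (Fin m → ℝ) × (Fin l → ℝ)) ∈ TF := by
    have h := hFmaps c₀ hc₀SF
    rwa [hFc₀] at h
  -- the level-set parametrization Γ
  set Γ : (Fin m → ℝ) → (Fin (min d (n + k)) → ℝ) := fun u => Finv (u, 0) with hΓdef
  have hΓ0 : Γ 0 = c₀ := by
    have h := hFinvF c₀ hc₀SF
    rw [hFc₀] at h
    exact h
  -- semicontinuity of the rank
  have hLmem : ∀ i : Fin l, lL (Pi.basisFun ℝ (Fin l) i) ∈ L := by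
    intro i; rw [← hlrange]; exact LinearMap.mem_range_self _ _
  have hvex : ∀ i : Fin l, ∃ v, (Dg₁ c₀) v = lL (Pi.basisFun ℝ (Fin l) i) := fun i => hLmem i
  choose v hv using hvex
  set Φfam : (Fin (min d (n + k)) → ℝ) → (Fin l → (Fin l → ℝ)) :=
    fun c => fun i => πLc ((Dg₁ c) (v i)) with hΦdef
  have hΦcont : ContinuousOn Φfam W := by
    apply continuousOn_pi.2
    intro i
    have h1 : ContinuousOn (fun c : Fin (min d (n + k)) → ℝ => fderiv ℝ ψ (ι c)) W := by
      apply (hψ.continuousOn_fderiv_of_isOpen hV le_rfl).comp ι.continuous.continuousOn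
      intro c hc; exact hc
    have h2 : ContinuousOn (fun c : Fin (min d (n + k)) → ℝ =>
        (fderiv ℝ ψ (ι c)) (ι (v i))) W :=
      (ContinuousLinearMap.apply ℝ _ (ι (v i))).continuous.comp_continuousOn h1
    have h3 : ContinuousOn (fun c : Fin (min d (n + k)) → ℝ =>
        πLc (πA ((fderiv ℝ ψ (ι c)) (ι (v i))))) W :=
      (πLc.continuous.comp πA.continuous).comp_continuousOn h2
    exact h3
  have hindep₀ : LinearIndependent ℝ (Φfam c₀) := by
    have heq : Φfam c₀ = fun i => (Pi.basisFun ℝ (Fin l)) i := by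
      funext i
      show πL ((Dg₁ c₀) (v i)) = _
      rw [hv i]
      exact hπl _
    rw [heq]
    exact (Pi.basisFun ℝ (Fin l)).linearIndependent
  set W₂ : Set (Fin (min d (n + k)) → ℝ) := W ∩ Φfam ⁻¹' {q | LinearIndependent ℝ q}
    with hW₂def
  have hW₂open : IsOpen W₂ :=
    ContinuousOn.isOpen_inter_preimage hΦcont hWopen isOpen_setOf_linearIndependent
  have hc₀W₂ : c₀ ∈ W₂ := ⟨hc₀W, hindep₀⟩
  have hinjL : ∀ c ∈ W₂, ∀ x ∈ LinearMap.range
      ((Dg₁ c : (Fin (min d (n + k)) → ℝ) →ₗ[ℝ] (Fin n → ℝ))), πL x = 0 → x = 0 := by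
    intro c hc
    apply inj_on_of_finrank_map
    have hle : finrank ℝ ((LinearMap.range
        ((Dg₁ c : (Fin (min d (n + k)) → ℝ) →ₗ[ℝ] (Fin n → ℝ)))).map πL) ≤ l :=
      le_trans (Submodule.finrank_map_le πL _) (le_of_eq (hrank' c hc.1))
    have hge : l ≤ finrank ℝ ((LinearMap.range
        ((Dg₁ c : (Fin (min d (n + k)) → ℝ) →ₗ[ℝ] (Fin n → ℝ)))).map πL) := by
      apply le_finrank_of_linearIndependent (v := Φfam c) ?_ hc.2
      intro i
      exact ⟨(Dg₁ c) (v i), LinearMap.mem_range_self _ _, rfl⟩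
    rw [hrank' c hc.1]
    omega
  -- a good ball around 0
  have hΓcontAt : ContinuousAt Γ 0 := by
    have h1 : ContinuousAt Finv ((0 : Fin m → ℝ), (0 : Fin l → ℝ)) :=
      hFinvcdOn.continuousOn.continuousAt (hTFo.mem_nhds h0TF)
    have h2 : ContinuousAt (fun u : Fin m → ℝ => ((u, (0 : Fin l → ℝ)))) 0 :=
      (continuous_id.prodMk continuous_const).continuousAt
    exact ContinuousAt.comp (g := Finv)
      (f := fun u : Fin m → ℝ => ((u, (0 : Fin l → ℝ)))) h1 h2
  obtain ⟨ε, hεpos, hball⟩ : ∃ ε > 0, ∀ u ∈ Metric.ball (0 : Fin m → ℝ) ε,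
      (((u : Fin m → ℝ), (0 : Fin l → ℝ)) ∈ TF ∧ Γ u ∈ W₂) := by
    have h1 : {u : Fin m → ℝ | ((u : Fin m → ℝ), (0 : Fin l → ℝ)) ∈ TF}
        ∈ nhds (0 : Fin m → ℝ) :=
      (continuous_id.prodMk continuous_const).continuousAt.preimage_mem_nhds
        (hTFo.mem_nhds h0TF)
    have h2 : {u : Fin m → ℝ | Γ u ∈ W₂} ∈ nhds (0 : Fin m → ℝ) :=
      hΓcontAt.preimage_mem_nhds (hW₂open.mem_nhds (by rw [hΓ0]; exact hc₀W₂))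
    obtain ⟨ε, hεpos, hsub⟩ := Metric.mem_nhds_iff.mp (inter_mem h1 h2)
    exact ⟨ε, hεpos, fun u hu => hsub hu⟩
  set B₀ := Metric.ball (0 : Fin m → ℝ) ε with hB₀def
  have hB₀TF : ∀ u ∈ B₀, ((u : Fin m → ℝ), (0 : Fin l → ℝ)) ∈ TF := fun u hu => (hball u hu).1
  have hΓW₂ : ∀ u ∈ B₀, Γ u ∈ W₂ := fun u hu => (hball u hu).2
  have hΓW : ∀ u ∈ B₀, Γ u ∈ W := fun u hu => (hΓW₂ u hu).1
  have hΓSF : ∀ u ∈ B₀, Γ u ∈ SF := fun u hu => hFinvmaps _ (hB₀TF u hu)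
  have hFΓ : ∀ u ∈ B₀, F (Γ u) = (u, 0) := fun u hu => hFFinv _ (hB₀TF u hu)
  have hπKΓ : ∀ u ∈ B₀, πKc (Γ u - c₀) = u := fun u hu => congrArg Prod.fst (hFΓ u hu)
  have hπLΓ : ∀ u ∈ B₀, πLc (g₁ (Γ u) - y) = 0 := fun u hu => congrArg Prod.snd (hFΓ u hu)
  have hΓdiffAt : ∀ u ∈ B₀, HasFDerivAt Γ
      ((fderiv ℝ Finv ((u : Fin m → ℝ), (0 : Fin l → ℝ))).comp
        (ContinuousLinearMap.inl ℝ (Fin m → ℝ) (Fin l → ℝ))) u := by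
    intro u hu
    have h1 : DifferentiableAt ℝ Finv ((u : Fin m → ℝ), (0 : Fin l → ℝ)) :=
      (hFinvcdOn.differentiableOn one_ne_zero).differentiableAt (hTFo.mem_nhds (hB₀TF u hu))
    exact HasFDerivAt.comp (g := Finv)
      (f := fun u : Fin m → ℝ => ((u, (0 : Fin l → ℝ)))) u h1.hasFDerivAt
      (ContinuousLinearMap.inl ℝ (Fin m → ℝ) (Fin l → ℝ)).hasFDerivAt
  -- zero derivative of g₁ ∘ Γ
  have hzero : ∀ u ∈ B₀, HasFDerivAt (fun u' => g₁ (Γ u'))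
      (0 : (Fin m → ℝ) →L[ℝ] (Fin n → ℝ)) u := by
    intro u hu
    set DΓu := (fderiv ℝ Finv ((u : Fin m → ℝ), (0 : Fin l → ℝ))).comp
      (ContinuousLinearMap.inl ℝ (Fin m → ℝ) (Fin l → ℝ)) with hDΓudef
    have hcomp : HasFDerivAt (fun u' => g₁ (Γ u')) ((Dg₁ (Γ u)).comp DΓu) u :=
      (hg₁_fd _ (hΓW u hu)).comp u (hΓdiffAt u hu)
    have h0 : (Dg₁ (Γ u)).comp DΓu = 0 := by
      have hev : (fun u' => πLc (g₁ (Γ u') - y)) =ᶠ[nhds u] (fun _ => (0 : Fin l → ℝ)) :=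
        eventually_of_mem (Metric.isOpen_ball.mem_nhds hu) (fun u' hu' => hπLΓ u' hu')
      have hfd2 : HasFDerivAt (fun u' => πLc (g₁ (Γ u') - y))
          (πLc.comp ((Dg₁ (Γ u)).comp DΓu)) u :=
        πLc.hasFDerivAt.comp u (hcomp.sub_const y)
      have heq0 : πLc.comp ((Dg₁ (Γ u)).comp DΓu) = 0 := by
        have h1 := hfd2.fderiv
        have h2 : fderiv ℝ (fun u' => πLc (g₁ (Γ u') - y)) u = 0 := by
          rw [hev.fderiv_eq]; exact fderiv_const_apply 0
        rw [← h1]; exact h2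
      apply ContinuousLinearMap.ext
      intro w
      have hval : πL ((Dg₁ (Γ u)) (DΓu w)) = 0 := by
        have h3 := DFunLike.congr_fun heq0 w
        exact h3
      have h4 := hinjL (Γ u) (hΓW₂ u hu) _ (LinearMap.mem_range_self _ (DΓu w)) hval
      simpa using h4
    rw [← h0]
    exact hcomp
  have hconst : ∀ u ∈ B₀, g₁ (Γ u) = y := by
    intro u hu
    have h := const_on_ball_of_fderiv_zero hzero u hu
    rw [hΓ0, hg₁c₀] at h
    exact h
  -- the derivative of Γ at 0
  set DΓ₀ := (fderiv ℝ Finv ((0 : Fin m → ℝ), (0 : Fin l → ℝ))).comp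
    (ContinuousLinearMap.inl ℝ (Fin m → ℝ) (Fin l → ℝ)) with hDΓ₀def
  have h0B₀ : (0 : Fin m → ℝ) ∈ B₀ := Metric.mem_ball_self hεpos
  have hΓ0fd : HasFDerivAt Γ DΓ₀ 0 := hΓdiffAt 0 h0B₀
  have hπKDΓ : ∀ w, πKc (DΓ₀ w) = w := by
    have hfd : HasFDerivAt (fun u => πKc (Γ u - c₀)) (πKc.comp DΓ₀) 0 :=
      πKc.hasFDerivAt.comp 0 (hΓ0fd.sub_const c₀)
    have hev : (fun u => πKc (Γ u - c₀)) =ᶠ[nhds (0 : Fin m → ℝ)] (fun u => u) :=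
      eventually_of_mem (Metric.isOpen_ball.mem_nhds h0B₀) (fun u hu => hπKΓ u hu)
    have heq : πKc.comp DΓ₀ = ContinuousLinearMap.id ℝ (Fin m → ℝ) := by
      have h1 := hfd.fderiv
      have h2 : fderiv ℝ (fun u => πKc (Γ u - c₀)) 0 = ContinuousLinearMap.id ℝ _ := by
        rw [hev.fderiv_eq]; exact fderiv_id
      rw [← h1]; exact h2
    intro w
    exact DFunLike.congr_fun heq w
  have hDΓ₀K : ∀ w, DΓ₀ w ∈ K := by
    have hg₁Γ0 : HasFDerivAt g₁ (Dg₁ c₀) (Γ 0) := by rw [hΓ0]; exact hg₁_fd c₀ hc₀W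
    have hfd : HasFDerivAt (fun u => g₁ (Γ u)) ((Dg₁ c₀).comp DΓ₀) 0 := hg₁Γ0.comp 0 hΓ0fd
    have hev : (fun u => g₁ (Γ u)) =ᶠ[nhds (0 : Fin m → ℝ)] (fun _ => y) :=
      eventually_of_mem (Metric.isOpen_ball.mem_nhds h0B₀) (fun u hu => hconst u hu)
    have heq : (Dg₁ c₀).comp DΓ₀ = 0 := by
      have h1 := hfd.fderiv
      have h2 : fderiv ℝ (fun u => g₁ (Γ u)) 0 = 0 := by
        rw [hev.fderiv_eq]; exact fderiv_const_apply y
      rw [← h1]; exact h2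
    intro w
    have h3 := DFunLike.congr_fun heq w
    simp only [ContinuousLinearMap.comp_apply, ContinuousLinearMap.zero_apply] at h3
    exact LinearMap.mem_ker.mpr h3
    -- injectivity of Dg on K and the subspace R
  have hDg_inj : ∀ vv, (Dg c₀) vv = 0 → vv = 0 := by
    have hev : (fun c => φ (g c)) =ᶠ[nhds c₀] (fun c => ι c) :=
      eventually_of_mem (hWopen.mem_nhds hc₀W) hφg
    have h1 : fderiv ℝ (fun c => φ (g c)) c₀
        = (ι : (Fin (min d (n + k)) → ℝ) →L[ℝ] (Fin (n + k) → ℝ)) := by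
      rw [hev.fderiv_eq]
      exact ι.fderiv
    have h2 : fderiv ℝ (φ ∘ g) c₀ = (fderiv ℝ φ x₀).comp (Dg c₀) := by
      have hdg : DifferentiableAt ℝ g c₀ := (hg_fd c₀ hc₀W).differentiableAt
      have hdφ : DifferentiableAt ℝ φ (g c₀) := by rw [hgc₀]; exact hφdiff x₀ hx₀U
      have h3 := fderiv_comp c₀ hdφ hdg
      rw [(hg_fd c₀ hc₀W).fderiv] at h3
      rw [hgc₀] at h3
      exact h3
    have h4 : (fderiv ℝ φ x₀).comp (Dg c₀)
        = (ι : (Fin (min d (n + k)) → ℝ) →L[ℝ] (Fin (n + k) → ℝ)) := by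
      rw [← h2]; exact h1
    intro vv h0
    have h5 := DFunLike.congr_fun h4 vv
    simp only [ContinuousLinearMap.comp_apply] at h5
    rw [h0, map_zero] at h5
    have h6 : planeExt (n + k) d vv = 0 := h5.symm
    exact planeExt_injective (n + k) d (by rw [h6, map_zero])
  have hDg₂K_inj : ∀ vv ∈ K, (Dg₂ c₀) vv = 0 → vv = 0 := by
    intro vv hvK h2
    apply hDg_inj
    apply eq_zero_of_funLeft (n := n) (k := k)
    · exact hvK
    · exact h2
  set R : Submodule ℝ (Fin k → ℝ) :=
    K.map ((Dg₂ c₀ : (Fin (min d (n + k)) → ℝ) →ₗ[ℝ] (Fin k → ℝ))) with hRdef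
  have hRrank : finrank ℝ R = m := by
    have h1 := ((Dg₂ c₀ : (Fin (min d (n + k)) → ℝ) →ₗ[ℝ] (Fin k → ℝ)).domRestrict
      K).finrank_range_add_finrank_ker
    rw [LinearMap.range_domRestrict] at h1
    have hker : LinearMap.ker ((Dg₂ c₀ : (Fin (min d (n + k)) → ℝ) →ₗ[ℝ]
        (Fin k → ℝ)).domRestrict K) = ⊥ := by
      rw [Submodule.eq_bot_iff]
      rintro ⟨x, hxK⟩ hx0
      have : x = 0 := hDg₂K_inj x hxK hx0
      exact Subtype.ext this
    rw [hker, finrank_bot, add_zero] at h1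
    rw [h1, ← hmdef]
  have hmk : m ≤ k := by
    rw [← hRrank]
    have h := R.finrank_le
    rwa [Module.finrank_fin_fun] at h
  obtain ⟨Q, hQcompl⟩ := Submodule.exists_isCompl R
  have hQrank : finrank ℝ Q = k - m := by
    have h := Submodule.finrank_add_eq_of_isCompl hQcompl
    rw [hRrank, Module.finrank_fin_fun] at h
    omega
  obtain ⟨νQ, πQ, hνrange, hπν, hνπ⟩ := exists_model Q hQrank
  set νQc : (Fin (k - m) → ℝ) →L[ℝ] (Fin k → ℝ) := νQ.toContinuousLinearMap with hνQc
  -- splitting of ℝ^k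
  set e := splitEquiv k m hmk with hedef
  set Θ : (Fin k → ℝ) → (Fin k → ℝ) := fun w => g₂ (Γ (e w).1) + νQ (e w).2 with hΘdef
  have he0 : e (0 : Fin k → ℝ) = 0 := map_zero _
  have hΘ0 : Θ 0 = z₀ := by
    show g₂ (Γ (e (0:Fin k → ℝ)).1) + νQ (e (0:Fin k → ℝ)).2 = z₀
    rw [he0]
    show g₂ (Γ 0) + νQ 0 = z₀
    rw [hΓ0, hg₂c₀, map_zero, add_zero]
  -- Θ is C¹ at 0
  set ec : (Fin k → ℝ) →L[ℝ] ((Fin m → ℝ) × (Fin (k - m) → ℝ)) :=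
    (e : (Fin k → ℝ) →ₗ[ℝ] ((Fin m → ℝ) × (Fin (k - m) → ℝ))).toContinuousLinearMap
    with hecdef
  have hec_apply : ∀ w, ec w = e w := fun w => rfl
  have hΓcd : ContDiffAt ℝ 1 Γ 0 := by
    have h1 : ContDiffAt ℝ 1 Finv ((0 : Fin m → ℝ), (0 : Fin l → ℝ)) :=
      hFinvcdOn.contDiffAt (hTFo.mem_nhds h0TF)
    have h2 : ContDiffAt ℝ 1 (fun u : Fin m → ℝ => ((u, (0 : Fin l → ℝ)))) 0 :=
      (contDiff_id.prodMk contDiff_const).contDiffAt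
    exact ContDiffAt.comp (g := Finv)
      (f := fun u : Fin m → ℝ => ((u, (0 : Fin l → ℝ)))) 0 h1 h2
  have hg₂cd : ContDiffAt ℝ 1 g₂ c₀ := (πB.contDiff.contDiffAt).comp c₀ (hgcd c₀ hc₀W)
  have hΘcd : ContDiffAt ℝ 1 Θ 0 := by
    have hw1 : ContDiffAt ℝ 1 (fun w : Fin k → ℝ => (e w).1) 0 :=
      ((ContinuousLinearMap.fst ℝ (Fin m → ℝ) (Fin (k - m) → ℝ)).comp ec).contDiff.contDiffAt
    have hw2 : ContDiffAt ℝ 1 (fun w : Fin k → ℝ => νQ (e w).2) 0 :=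
      (νQc.comp ((ContinuousLinearMap.snd ℝ (Fin m → ℝ) (Fin (k - m) → ℝ)).comp
        ec)).contDiff.contDiffAt
    have hΓ' : ContDiffAt ℝ 1 Γ ((fun w : Fin k → ℝ => (e w).1) 0) := by
      show ContDiffAt ℝ 1 Γ ((e (0:Fin k → ℝ)).1)
      rw [he0]
      exact hΓcd
    have hmid : ContDiffAt ℝ 1 (fun w : Fin k → ℝ => Γ (e w).1) 0 :=
      ContDiffAt.comp (g := Γ) (f := fun w : Fin k → ℝ => (e w).1) 0 hΓ' hw1
    have hg₂' : ContDiffAt ℝ 1 g₂ ((fun w : Fin k → ℝ => Γ (e w).1) 0) := by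
      show ContDiffAt ℝ 1 g₂ (Γ ((e (0:Fin k → ℝ)).1))
      rw [he0]
      show ContDiffAt ℝ 1 g₂ (Γ 0)
      rw [hΓ0]
      exact hg₂cd
    have hA : ContDiffAt ℝ 1 (fun w : Fin k → ℝ => g₂ (Γ (e w).1)) 0 :=
      ContDiffAt.comp (g := g₂) (f := fun w : Fin k → ℝ => Γ (e w).1) 0 hg₂' hmid
    exact hA.add hw2
  -- derivative of Θ at 0
  set T : (Fin k → ℝ) →L[ℝ] (Fin k → ℝ) :=
    ((Dg₂ c₀).comp DΓ₀).comp
      ((ContinuousLinearMap.fst ℝ (Fin m → ℝ) (Fin (k - m) → ℝ)).comp ec)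
      + νQc.comp ((ContinuousLinearMap.snd ℝ (Fin m → ℝ) (Fin (k - m) → ℝ)).comp ec)
    with hTdef
  have hΘfd : HasFDerivAt Θ T 0 := by
    have hinner : HasFDerivAt (fun w : Fin k → ℝ => (e w).1)
        ((ContinuousLinearMap.fst ℝ (Fin m → ℝ) (Fin (k - m) → ℝ)).comp ec) 0 :=
      ((ContinuousLinearMap.fst ℝ (Fin m → ℝ) (Fin (k - m) → ℝ)).comp ec).hasFDerivAt
    have hΓ'fd : HasFDerivAt Γ DΓ₀ ((fun w : Fin k → ℝ => (e w).1) 0) := by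
      show HasFDerivAt Γ DΓ₀ ((e (0:Fin k → ℝ)).1)
      rw [he0]
      exact hΓ0fd
    have hmid : HasFDerivAt (fun w : Fin k → ℝ => Γ (e w).1)
        (DΓ₀.comp ((ContinuousLinearMap.fst ℝ (Fin m → ℝ) (Fin (k - m) → ℝ)).comp ec)) 0 :=
      HasFDerivAt.comp (g := Γ) (f := fun w : Fin k → ℝ => (e w).1) 0 hΓ'fd hinner
    have hg₂'fd : HasFDerivAt g₂ (Dg₂ c₀) ((fun w : Fin k → ℝ => Γ (e w).1) 0) := by
      show HasFDerivAt g₂ (Dg₂ c₀) (Γ ((e (0:Fin k → ℝ)).1))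
      rw [he0]
      show HasFDerivAt g₂ (Dg₂ c₀) (Γ 0)
      rw [hΓ0]
      exact hg₂_fd c₀ hc₀W
    have hA : HasFDerivAt (fun w : Fin k → ℝ => g₂ (Γ (e w).1))
        ((Dg₂ c₀).comp (DΓ₀.comp
          ((ContinuousLinearMap.fst ℝ (Fin m → ℝ) (Fin (k - m) → ℝ)).comp ec))) 0 :=
      HasFDerivAt.comp (g := g₂) (f := fun w : Fin k → ℝ => Γ (e w).1) 0 hg₂'fd hmid
    have hB : HasFDerivAt (fun w : Fin k → ℝ => νQ (e w).2)
        (νQc.comp ((ContinuousLinearMap.snd ℝ (Fin m → ℝ) (Fin (k - m) → ℝ)).comp ec)) 0 :=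
      (νQc.comp ((ContinuousLinearMap.snd ℝ (Fin m → ℝ) (Fin (k - m) → ℝ)).comp
        ec)).hasFDerivAt
    have hsum := hA.add hB
    have hassoc : ((Dg₂ c₀).comp (DΓ₀.comp
        ((ContinuousLinearMap.fst ℝ (Fin m → ℝ) (Fin (k - m) → ℝ)).comp ec)))
        = ((Dg₂ c₀).comp DΓ₀).comp
          ((ContinuousLinearMap.fst ℝ (Fin m → ℝ) (Fin (k - m) → ℝ)).comp ec) :=
      ContinuousLinearMap.ext fun w => rfl
    rw [hassoc] at hsum
    exact hsum
  have hTinj : Function.Injective T := by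
    have hz : ∀ w, T w = 0 → w = 0 := by
      intro w hw
      have hTw : T w = (Dg₂ c₀) (DΓ₀ ((e w).1)) + νQ ((e w).2) := rfl
      have hr : (Dg₂ c₀) (DΓ₀ ((e w).1)) ∈ R :=
        ⟨DΓ₀ ((e w).1), hDΓ₀K _, rfl⟩
      have hqm : νQ ((e w).2) ∈ Q := by
        rw [← hνrange]; exact LinearMap.mem_range_self _ _
      have hw0 : (Dg₂ c₀) (DΓ₀ ((e w).1)) + νQ ((e w).2) = 0 := by rw [← hTw]; exact hw
      obtain ⟨h10, h20⟩ := eq_zero_pair_of_isCompl hQcompl hr hqm hw0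
      have he2 : (e w).2 = 0 := by
        have h := congrArg πQ h20
        rwa [hπν, map_zero] at h
      have he1 : (e w).1 = 0 := by
        have h3 : DΓ₀ ((e w).1) = 0 := hDg₂K_inj _ (hDΓ₀K _) h10
        have h4 := hπKDΓ ((e w).1)
        rw [h3, map_zero] at h4
        exact h4.symm
      have hew : e w = 0 := Prod.ext he1 he2
      have h5 := congrArg e.symm hew
      rwa [LinearEquiv.symm_apply_apply, map_zero] at h5
    intro a b hab
    have h := hz (a - b) (by rw [map_sub, hab, sub_self])
    exact sub_eq_zero.mp h
  set TE := ((T : (Fin k → ℝ) →ₗ[ℝ] (Fin k → ℝ)).linearEquivOfInjective hTinj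
    rfl).toContinuousLinearEquiv with hTEdef
  have hΘfd' : HasFDerivAt Θ (TE : (Fin k → ℝ) →L[ℝ] (Fin k → ℝ)) 0 := by
    have heq : (TE : (Fin k → ℝ) →L[ℝ] (Fin k → ℝ)) = T :=
      ContinuousLinearMap.ext fun w => rfl
    rw [heq]
    exact hΘfd
  obtain ⟨SΘ0, TΘ0, Λ, hΘchart, h0SΘ0⟩ := isChart_of_ift hΘcd hΘfd'
  obtain ⟨hSΘo, hTΘo, hΘcdOn, hΛcdOn, hΘmaps, hΛmaps, hΛΘ, hΘΛ⟩ := id hΘchart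
  set My : Set (Fin k → ℝ) := {z : Fin k → ℝ | Fin.append y z ∈ M} with hMydef
  -- direction A: points of the plane are mapped into the fiber
  have hdirA : ∀ᶠ w in nhds (0 : Fin k → ℝ),
      (w ∈ (plane k m : Set (Fin k → ℝ)) → Θ w ∈ My) := by
    have hconte1 : ContinuousAt (fun w : Fin k → ℝ => (e w).1) 0 :=
      ((ContinuousLinearMap.fst ℝ (Fin m → ℝ)
        (Fin (k - m) → ℝ)).comp ec).continuous.continuousAt
    have hBmem : B₀ ∈ nhds ((fun w : Fin k → ℝ => (e w).1) 0) := by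
      show B₀ ∈ nhds ((e (0 : Fin k → ℝ)).1)
      rw [he0]
      exact Metric.isOpen_ball.mem_nhds h0B₀
    have hA := hconte1.preimage_mem_nhds hBmem
    filter_upwards [hA] with w hw hwpl
    have h2 : (e w).2 = 0 := (splitEquiv_snd_eq_zero_iff hmk w).mpr hwpl
    have hΘw : Θ w = g₂ (Γ ((e w).1)) := by
      show g₂ (Γ ((e w).1)) + νQ ((e w).2) = g₂ (Γ ((e w).1))
      rw [h2, map_zero, add_zero]
    have hu : (e w).1 ∈ B₀ := hw
    have hΓuW : Γ ((e w).1) ∈ W := hΓW _ hu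
    have hx' : g (Γ ((e w).1)) ∈ U ∩ M := hgW _ hΓuW
    have happ : Fin.append y (Θ w) = g (Γ ((e w).1)) := by
      rw [hΘw]
      have h1 : g₁ (Γ ((e w).1)) = y := hconst _ hu
      have h3 := append_funLeft (g (Γ ((e w).1)))
      calc Fin.append y (g₂ (Γ ((e w).1)))
          = Fin.append (g₁ (Γ ((e w).1))) (g₂ (Γ ((e w).1))) := by rw [h1]
        _ = g (Γ ((e w).1)) := h3
    show Fin.append y (Θ w) ∈ M
    rw [happ]
    exact hx'.2
  -- direction B: fiber points near z₀ come from the plane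
  set η : (Fin k → ℝ) → (Fin (min d (n + k)) → ℝ) :=
    fun z => ρ (φ (Fin.append y z)) with hηdef
  have hηz₀ : η z₀ = c₀ := rfl
  have happcont : ContinuousAt (fun z : Fin k → ℝ => Fin.append y z) z₀ :=
    (continuous_append_right y).continuousAt
  have hφcontAt : ContinuousAt φ x₀ := hφ.continuousOn.continuousAt (hU.mem_nhds hx₀U)
  have hηcont : ContinuousAt η z₀ := by
    have h1 : ContinuousAt (fun x => ρ (φ x)) x₀ :=
      ρ.continuous.continuousAt.comp hφcontAt
    exact ContinuousAt.comp (g := fun x => ρ (φ x))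
      (f := fun z : Fin k → ℝ => Fin.append y z) h1 happcont
  set esymc : ((Fin m → ℝ) × (Fin (k - m) → ℝ)) →L[ℝ] (Fin k → ℝ) :=
    (e.symm : ((Fin m → ℝ) × (Fin (k - m) → ℝ)) →ₗ[ℝ] (Fin k → ℝ)).toContinuousLinearMap
    with hesymc
  have hΞcont : Continuous (fun c : Fin (min d (n + k)) → ℝ =>
      e.symm (πKc (c - c₀), (0 : Fin (k - m) → ℝ))) := by
    have h1 : Continuous (fun c : Fin (min d (n + k)) → ℝ =>
        esymc (πKc (c - c₀), (0 : Fin (k - m) → ℝ))) :=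
      esymc.continuous.comp
        ((πKc.continuous.comp (continuous_id.sub continuous_const)).prodMk continuous_const)
    exact h1
  have hval0 : e.symm (πKc (η z₀ - c₀), (0 : Fin (k - m) → ℝ)) = 0 := by
    rw [hηz₀, sub_self, map_zero]
    exact map_zero (e.symm : ((Fin m → ℝ) × (Fin (k - m) → ℝ)) ≃ₗ[ℝ] (Fin k → ℝ))
  have hcond1 : ∀ᶠ w in nhds (0 : Fin k → ℝ), w ∈ SΘ0 := hSΘo.eventually_mem h0SΘ0
  have hZ1 : {z : Fin k → ℝ | Fin.append y z ∈ U} ∈ nhds z₀ :=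
    happcont.preimage_mem_nhds (hU.mem_nhds hx₀U)
  have hZ2 : {z : Fin k → ℝ | η z ∈ SF} ∈ nhds z₀ :=
    hηcont.preimage_mem_nhds (hSFo.mem_nhds (by rw [hηz₀]; exact hc₀SF))
  have hZ3 : {z : Fin k → ℝ |
      e.symm (πKc (η z - c₀), (0 : Fin (k - m) → ℝ)) ∈ SΘ0} ∈ nhds z₀ := by
    have hcont : ContinuousAt (fun z : Fin k → ℝ =>
        e.symm (πKc (η z - c₀), (0 : Fin (k - m) → ℝ))) z₀ :=
      ContinuousAt.comp (g := fun c : Fin (min d (n + k)) → ℝ =>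
        e.symm (πKc (c - c₀), (0 : Fin (k - m) → ℝ))) (f := η)
        (hΞcont.continuousAt) hηcont
    exact hcont.preimage_mem_nhds (hSΘo.mem_nhds (by rw [hval0]; exact h0SΘ0))
  have hZ : ({z : Fin k → ℝ | Fin.append y z ∈ U} ∩
      ({z : Fin k → ℝ | η z ∈ SF} ∩
        {z : Fin k → ℝ | e.symm (πKc (η z - c₀), (0 : Fin (k - m) → ℝ)) ∈ SΘ0}))
      ∈ nhds z₀ := inter_mem hZ1 (inter_mem hZ2 hZ3)
  have hΘtends : Filter.Tendsto Θ (nhds (0 : Fin k → ℝ)) (nhds z₀) := by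
    have h := hΘcd.continuousAt
    rwa [ContinuousAt, hΘ0] at h
  have hcond2 := hΘtends.eventually hZ
  have hdirB : ∀ᶠ w in nhds (0 : Fin k → ℝ),
      (Θ w ∈ My → w ∈ (plane k m : Set (Fin k → ℝ))) := by
    filter_upwards [hcond1, hcond2] with w hw1 hw2 hMyw
    obtain ⟨hzU, hzSF, hzSΘ⟩ := hw2
    have hxUM : Fin.append y (Θ w) ∈ U ∩ M := ⟨hzU, hMyw⟩
    have hpVD' : φ (Fin.append y (Θ w)) ∈ V ∩ ↑(plane (n + k) d) := by
      rw [← himg]; exact Set.mem_image_of_mem φ hxUM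
    have hιηz : ι (η (Θ w)) = φ (Fin.append y (Θ w)) := hιρ _ hpVD'.2
    have hgηz : g (η (Θ w)) = Fin.append y (Θ w) := by
      show ψ (ι (η (Θ w))) = _
      rw [hιηz]
      exact hψφ _ hzU
    have hg₁ηz : g₁ (η (Θ w)) = y := by
      show πA (g (η (Θ w))) = y
      rw [hgηz]
      exact funLeft_castAdd_append y (Θ w)
    have hFη : F (η (Θ w)) = (πKc (η (Θ w) - c₀), 0) := by
      show (πKc (η (Θ w) - c₀), πLc (g₁ (η (Θ w)) - y)) = _
      rw [hg₁ηz, sub_self, map_zero]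
    have hcΓ : η (Θ w) = Γ (πKc (η (Θ w) - c₀)) := by
      have h1 := hFinvF (η (Θ w)) hzSF
      rw [hFη] at h1
      exact h1.symm
    have hΘw' : Θ (e.symm (πKc (η (Θ w) - c₀), 0)) = Θ w := by
      show g₂ (Γ ((e (e.symm (πKc (η (Θ w) - c₀), 0))).1))
          + νQ ((e (e.symm (πKc (η (Θ w) - c₀), 0))).2) = Θ w
      rw [LinearEquiv.apply_symm_apply]
      show g₂ (Γ (πKc (η (Θ w) - c₀))) + νQ 0 = Θ w
      rw [map_zero, add_zero, ← hcΓ]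
      show πB (g (η (Θ w))) = Θ w
      rw [hgηz]
      exact funLeft_natAdd_append y (Θ w)
    have hweq : w = e.symm (πKc (η (Θ w) - c₀), 0) := by
      have h1 : Λ (Θ w) = w := hΛΘ w hw1
      have h2 : Λ (Θ (e.symm (πKc (η (Θ w) - c₀), 0)))
          = e.symm (πKc (η (Θ w) - c₀), 0) := hΛΘ _ hzSΘ
      rw [hΘw'] at h2
      exact h1.symm.trans h2
    rw [hweq]
    show e.symm (πKc (η (Θ w) - c₀), 0) ∈ plane k m
    apply (splitEquiv_snd_eq_zero_iff hmk _).mp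
    show (e (e.symm (πKc (η (Θ w) - c₀), 0))).2 = 0
    rw [LinearEquiv.apply_symm_apply]
  -- assemble the chart for the fiber
  have hiffZ : {w : Fin k → ℝ | Θ w ∈ My ↔ w ∈ (plane k m : Set (Fin k → ℝ))}
      ∈ nhds (0 : Fin k → ℝ) := by
    filter_upwards [hdirA, hdirB] with w h1 h2
    exact ⟨h2, h1⟩
  obtain ⟨O₃, hO₃sub, hO₃open, h0O₃⟩ := mem_nhds_iff.mp hiffZ
  have hΘchart2 := isChart_shrink hΘchart hO₃open
  obtain ⟨hSo, hTo, hΘcdOn2, hΛcdOn2, hSmaps, hTmaps, hleft, hright⟩ := id hΘchart2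
  refine ⟨TΘ0 ∩ Λ ⁻¹' (SΘ0 ∩ O₃), SΘ0 ∩ O₃, Λ, Θ, hTo, hSo, ?_, hΛcdOn2, hΘcdOn2,
    hTmaps, hSmaps, hright, hleft, ?_⟩
  · have h0S : (0 : Fin k → ℝ) ∈ SΘ0 ∩ O₃ := ⟨h0SΘ0, h0O₃⟩
    have h := hSmaps 0 h0S
    rwa [hΘ0] at h
  · have hpl : plane k (d - l) = plane k m := plane_congr (by omega)
    have hsetP : {y' : Fin k → ℝ | ∀ i : Fin k, d - l ≤ (i : ℕ) → y' i = 0}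
        = ↑(plane k m) := by rw [← hpl]; rfl
    rw [hsetP]
    apply isChart_image_inter hΘchart2.symm
    intro zz hzz
    have h1 : Θ (Λ zz) = zz := hright zz hzz
    have h2 : Λ zz ∈ SΘ0 ∩ O₃ := hTmaps zz hzz
    have h3 := hO₃sub h2.2
    simp only [Set.mem_setOf_eq] at h3
    rw [h1] at h3
    exact h3
end

section
/- Let n ≥ 1, k ≥ 0 and let M ⊆ ℝ^{n+k} be a bounded d-dimensional C¹ submanifold such that the projection Π_n : ℝ^{n+k} → ℝⁿ onto the first n coordinates, restricted to M, has constant rank l with l < d. Assume there is a strictly increasing map ι : {1, …, d} → {1, …, n+k} with ι(l) ≤ n such that the coordinate projection Π_ι : ℝ^{n+k} → ℝ^d, x ↦ (x_{ι(1)}, …, x_{ι(d)}), restricted to M, is a C¹ immersion. Then for every y ∈ Π_n(M), every connected component C of the fiber M_y = {z ∈ ℝ^k : (y, z) ∈ M} has nonempty frontier, i.e. (closure of C) \ C ≠ ∅. -/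
/-- The coordinate projection `Π_ι : ℝ^{n+k} → ℝ^d`, `x ↦ (x_{ι(1)}, …, x_{ι(d)})`,
as a linear map. -/
noncomputable def projAlong {N d : ℕ} (ι : Fin d → Fin N) :
    (Fin N → ℝ) →ₗ[ℝ] (Fin d → ℝ) :=
  LinearMap.funLeft ℝ ℝ ι

namespace FiberFrontier


/-- the subspace of vectors supported in the first `d` coordinates -/
def Sset (N d : ℕ) : Submodule ℝ (Fin N → ℝ) where
  carrier := {y | ∀ i : Fin N, d ≤ (i : ℕ) → y i = 0}
  add_mem' := by intro a b ha hb i hi; simp only [Pi.add_apply, ha i hi, hb i hi, add_zero]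
  zero_mem' := by intro i hi; rfl
  smul_mem' := by intro c a ha i hi; simp only [Pi.smul_apply, ha i hi, smul_zero]

lemma mem_Sset {N d : ℕ} {y : Fin N → ℝ} :
    y ∈ Sset N d ↔ ∀ i : Fin N, d ≤ (i : ℕ) → y i = 0 := Iff.rfl

lemma isClosed_Sset (N d : ℕ) : IsClosed ((Sset N d : Set (Fin N → ℝ))) := by
  have h : (Sset N d : Set (Fin N → ℝ)) = ⋂ i : Fin N, {y | d ≤ (i : ℕ) → y i = 0} := by
    ext y; simp only [Set.mem_iInter, Set.mem_setOf_eq]; exact Iff.rfl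
  rw [h]
  refine isClosed_iInter fun i => ?_
  by_cases hi : d ≤ (i : ℕ)
  · have : {y : Fin N → ℝ | d ≤ (i : ℕ) → y i = 0} = {y | y i = 0} := by
      ext y; simp [hi]
    rw [this]
    exact isClosed_eq (continuous_apply i) continuous_const
  · have : {y : Fin N → ℝ | d ≤ (i : ℕ) → y i = 0} = Set.univ := by
      ext y; simp [hi]
    rw [this]; exact isClosed_univ

noncomputable def extZero (N d : ℕ) : (Fin d → ℝ) →ₗ[ℝ] (Fin N → ℝ) where
  toFun u := fun i => if h : (i : ℕ) < d then u ⟨i, h⟩ else 0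
  map_add' a b := by funext i; by_cases h : (i : ℕ) < d <;> simp [h]
  map_smul' c a := by funext i; by_cases h : (i : ℕ) < d <;> simp [h]

lemma extZero_mem {N d : ℕ} (u : Fin d → ℝ) : extZero N d u ∈ Sset N d := by
  intro i hi
  simp [extZero, Nat.not_lt.mpr hi]

lemma extZero_apply_lt {N d : ℕ} (u : Fin d → ℝ) {i : Fin N} (h : (i : ℕ) < d) :
    extZero N d u i = u ⟨i, h⟩ := by simp [extZero, h]

lemma extZero_injective {N d : ℕ} (hdN : d ≤ N) : Function.Injective (extZero N d) := by
  intro a b hab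
  funext j
  have := congrFun hab ⟨(j : ℕ), lt_of_lt_of_le j.2 hdN⟩
  simpa [extZero, j.2] using this

lemma range_extZero {N d : ℕ} (hdN : d ≤ N) :
    LinearMap.range (extZero N d) = Sset N d := by
  apply le_antisymm
  · rintro - ⟨u, rfl⟩; exact extZero_mem u
  · intro x hx
    refine ⟨fun j => x ⟨(j : ℕ), lt_of_lt_of_le j.2 hdN⟩, funext fun i => ?_⟩
    by_cases h : (i : ℕ) < d
    · rw [extZero_apply_lt _ h]
    · rw [mem_Sset] at hx
      simp [extZero, h, (hx i (Nat.not_lt.mp h)).symm]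


variable {N d : ℕ} {M U V : Set (Fin N → ℝ)} {φ ψ : (Fin N → ℝ) → (Fin N → ℝ)}

lemma chart_fderiv (hU : IsOpen U) (hV : IsOpen V)
    (hφ : ContDiffOn ℝ 1 φ U) (hψ : ContDiffOn ℝ 1 ψ V)
    (hUV : ∀ y ∈ U, φ y ∈ V) (hψφ : ∀ y ∈ U, ψ (φ y) = y) (hφψ : ∀ y ∈ V, φ (ψ y) = y)
    {x' : Fin N → ℝ} (hx' : x' ∈ U) :
    HasFDerivAt φ (fderiv ℝ φ x') x' ∧ HasFDerivAt ψ (fderiv ℝ ψ (φ x')) (φ x') ∧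
      (fderiv ℝ ψ (φ x')).comp (fderiv ℝ φ x') = ContinuousLinearMap.id ℝ _ ∧
      (fderiv ℝ φ x').comp (fderiv ℝ ψ (φ x')) = ContinuousLinearMap.id ℝ _ := by
  have hφV : φ x' ∈ V := hUV x' hx'
  have hA : HasFDerivAt φ (fderiv ℝ φ x') x' :=
    ((hφ.differentiableOn one_ne_zero x' hx').differentiableAt (hU.mem_nhds hx')).hasFDerivAt
  have hB : HasFDerivAt ψ (fderiv ℝ ψ (φ x')) (φ x') :=
    ((hψ.differentiableOn one_ne_zero (φ x') hφV).differentiableAt (hV.mem_nhds hφV)).hasFDerivAt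
  refine ⟨hA, hB, ?_, ?_⟩
  · have hcomp : HasFDerivAt (ψ ∘ φ) ((fderiv ℝ ψ (φ x')).comp (fderiv ℝ φ x')) x' :=
      hB.comp x' hA
    have hev : (ψ ∘ φ) =ᶠ[nhds x'] id :=
      Filter.eventually_of_mem (hU.mem_nhds hx') fun y hy => hψφ y hy
    have hid : HasFDerivAt (id : (Fin N → ℝ) → _)
        ((fderiv ℝ ψ (φ x')).comp (fderiv ℝ φ x')) x' := hcomp.congr_of_eventuallyEq hev.symm
    exact (hid.unique (hasFDerivAt_id x')).symm ▸ rfl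
  · have hA' : HasFDerivAt φ (fderiv ℝ φ x') (ψ (φ x')) := by rw [hψφ x' hx']; exact hA
    have hcomp : HasFDerivAt (φ ∘ ψ) ((fderiv ℝ φ x').comp (fderiv ℝ ψ (φ x'))) (φ x') :=
      hA'.comp (φ x') hB
    have hev : (φ ∘ ψ) =ᶠ[nhds (φ x')] id :=
      Filter.eventually_of_mem (hV.mem_nhds hφV) fun y hy => hφψ y hy
    have hid : HasFDerivAt (id : (Fin N → ℝ) → _)
        ((fderiv ℝ φ x').comp (fderiv ℝ ψ (φ x'))) (φ x') := hcomp.congr_of_eventuallyEq hev.symm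
    exact hid.unique (hasFDerivAt_id (φ x'))

lemma chart_tangent (hU : IsOpen U) (hV : IsOpen V)
    (hφ : ContDiffOn ℝ 1 φ U) (hψ : ContDiffOn ℝ 1 ψ V)
    (hUV : ∀ y ∈ U, φ y ∈ V) (hψφ : ∀ y ∈ U, ψ (φ y) = y) (hφψ : ∀ y ∈ V, φ (ψ y) = y)
    (heq : φ '' (U ∩ M) = V ∩ (Sset N d : Set (Fin N → ℝ)))
    {x' : Fin N → ℝ} (hx' : x' ∈ U ∩ M) :
    tangentSpaceAt N M x' =
      (Sset N d).map ((fderiv ℝ ψ (φ x')) : (Fin N → ℝ) →ₗ[ℝ] (Fin N → ℝ)) := by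
  obtain ⟨hA, hB, hBA, hAB⟩ := chart_fderiv hU hV hφ hψ hUV hψφ hφψ hx'.1
  have hφx'VS : φ x' ∈ V ∩ (Sset N d : Set (Fin N → ℝ)) := heq ▸ ⟨x', hx', rfl⟩
  apply le_antisymm
  · -- span ≤ map
    rw [tangentSpaceAt, Submodule.span_le]
    rintro v ⟨γ, hγ0, hγM, hγd⟩
    have hγU : ∀ᶠ t in nhds (0 : ℝ), γ t ∈ U := by
      have : ContinuousAt γ 0 := hγd.continuousAt
      have := this.preimage_mem_nhds (hU.mem_nhds (hγ0 ▸ hx'.1))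
      exact this
    have hA0 : HasFDerivAt φ (fderiv ℝ φ x') (γ 0) := by rw [hγ0]; exact hA
    have hδd : HasDerivAt (φ ∘ γ) (fderiv ℝ φ x' v) 0 := hA0.comp_hasDerivAt 0 hγd
    have hδS : ∀ᶠ t in nhds (0 : ℝ), (φ ∘ γ) t ∈ (Sset N d : Set (Fin N → ℝ)) := by
      filter_upwards [hγU, hγM] with t h1 h2
      have : φ (γ t) ∈ V ∩ (Sset N d : Set (Fin N → ℝ)) := heq ▸ ⟨γ t, ⟨h1, h2⟩, rfl⟩
      exact this.2
    have hAvS : fderiv ℝ φ x' v ∈ Sset N d := by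
      rw [hasDerivAt_iff_tendsto_slope] at hδd
      refine (isClosed_Sset N d).mem_of_tendsto hδd ?_
      have hδ0 : (φ ∘ γ) 0 ∈ Sset N d := by
        simpa only [Function.comp_apply, hγ0, SetLike.mem_coe] using hφx'VS.2
      filter_upwards [hδS.filter_mono nhdsWithin_le_nhds] with t ht
      rw [slope_def_module]
      exact (Sset N d).smul_mem _ ((Sset N d).sub_mem ht hδ0)
    have hv : (fderiv ℝ ψ (φ x')) (fderiv ℝ φ x' v) = v := by
      have := ContinuousLinearMap.ext_iff.mp hBA v
      simpa using this
    rw [← hv]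
    exact ⟨fderiv ℝ φ x' v, hAvS, rfl⟩
  · -- map ≤ span
    rintro w ⟨s, hs, rfl⟩
    apply Submodule.subset_span
    refine ⟨fun t => ψ (φ x' + t • s), ?_, ?_, ?_⟩
    · simp [hψφ x' hx'.1]
    · have hcont : Continuous fun t : ℝ => φ x' + t • s := by continuity
      have h0 : (fun t : ℝ => φ x' + t • s) 0 = φ x' := by simp
      have hev : ∀ᶠ t in nhds (0 : ℝ), φ x' + t • s ∈ V := by
        have h1 := hcont.continuousAt (x := (0 : ℝ))
        rw [ContinuousAt] at h1
        rw [show φ x' + (0:ℝ) • s = φ x' by simp] at h1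
        exact h1.eventually_mem (hV.mem_nhds hφx'VS.1)
      filter_upwards [hev] with t ht
      have hmemS : φ x' + t • s ∈ Sset N d :=
        (Sset N d).add_mem hφx'VS.2 ((Sset N d).smul_mem t hs)
      have : φ x' + t • s ∈ φ '' (U ∩ M) := heq ▸ ⟨ht, hmemS⟩
      obtain ⟨m, hm, hφm⟩ := this
      rw [← hφm, hψφ m hm.1]
      exact hm.2
    · have hinner : HasDerivAt (fun t : ℝ => φ x' + t • s) s 0 := by
        simpa using ((hasDerivAt_id (0 : ℝ)).smul_const s).const_add (φ x')
      have hB0 : HasFDerivAt ψ (fderiv ℝ ψ (φ x')) (φ x' + (0 : ℝ) • s) := by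
        simpa using hB
      exact hB0.comp_hasDerivAt 0 hinner


set_option maxHeartbeats 2000000 in
lemma key {n k d l : ℕ} (hld : l < d)
    {M : Set (Fin (n + k) → ℝ)}
    (hM : IsC1Submanifold (n + k) d M)
    (hrank : ∀ z ∈ M, Module.finrank ℝ ((tangentSpaceAt (n + k) M z).map (projFst n k)) = l)
    (ι : Fin d → Fin (n + k)) (hι : StrictMono ι)
    (hιl : ∀ j : Fin d, (j : ℕ) < l → (ι j : ℕ) < n)
    (himm : ∀ z ∈ M, ∀ v ∈ tangentSpaceAt (n + k) M z, projAlong ι v = 0 → v = 0)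
    {y : Fin n → ℝ} {z : Fin k → ℝ} (hzM : Fin.append y z ∈ M) :
    ∃ c : Fin k, Fin.natAdd n c = ι ⟨l, hld⟩ ∧
      ∃ ε : ℝ, 0 < ε ∧ ∃ γ : ℝ → (Fin k → ℝ), ∃ w : Fin k → ℝ,
        γ 0 = z ∧ ContinuousOn γ (Set.Icc (-ε) ε) ∧
        (∀ t ∈ Set.Icc (-ε) ε, Fin.append y (γ t) ∈ M) ∧
        HasDerivAt γ w 0 ∧ w c ≠ 0 := by
  classical
  set x : Fin (n + k) → ℝ := Fin.append y z with hxdef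
  obtain ⟨U, V, φ, ψ, hU, hV, hxU, hφ, hψ, hUV, hVU, hψφ, hφψ, heq0⟩ := hM x hzM
  have heq : φ '' (U ∩ M) = V ∩ (Sset (n + k) d : Set (Fin (n + k) → ℝ)) := heq0
  have hdN : d ≤ n + k := by
    have := Fintype.card_le_of_injective ι hι.injective
    simpa using this
  set S := Sset (n + k) d with hSdef
  set e := extZero (n + k) d with hedef
  let eC : (Fin d → ℝ) →L[ℝ] (Fin (n + k) → ℝ) := LinearMap.toContinuousLinearMap e
  have heCe : ∀ u, eC u = e u := fun u => rfl
  set w₀ := φ x with hw₀def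
  have hw₀VS : w₀ ∈ V ∩ (S : Set _) := heq ▸ ⟨x, ⟨hxU, hzM⟩, rfl⟩
  set Pmap : (Fin d → ℝ) → (Fin (n + k) → ℝ) := fun u => ψ (w₀ + e u) with hPdef
  set Ω : Set (Fin d → ℝ) := {u | w₀ + e u ∈ V} with hΩdef
  have hcontaff : Continuous fun u : Fin d → ℝ => w₀ + e u := by
    have : Continuous fun u : Fin d → ℝ => w₀ + eC u := continuous_const.add eC.continuous
    exact this
  have hΩopen : IsOpen Ω := hV.preimage hcontaff
  have h0Ω : (0 : Fin d → ℝ) ∈ Ω := by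
    have : w₀ + e 0 = w₀ := by rw [map_zero, add_zero]
    simp only [hΩdef, Set.mem_setOf_eq, this]
    exact hw₀VS.1
  have hPmem : ∀ u ∈ Ω, (Pmap u ∈ U ∩ M) ∧ φ (Pmap u) = w₀ + e u := by
    intro u hu
    have hmemVS : w₀ + e u ∈ V ∩ (S : Set _) :=
      ⟨hu, S.add_mem hw₀VS.2 (extZero_mem u)⟩
    rw [← heq] at hmemVS
    obtain ⟨m, hm, hφm⟩ := hmemVS
    have hPm : Pmap u = m := by
      simp only [hPdef, ← hφm, hψφ m hm.1]
    rw [hPm, hφm]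
    exact ⟨hm, rfl⟩
  set Bu : (Fin d → ℝ) → ((Fin (n + k) → ℝ) →L[ℝ] (Fin (n + k) → ℝ)) :=
    fun u => fderiv ℝ ψ (w₀ + e u) with hBdef
  have htang : ∀ u ∈ Ω, tangentSpaceAt (n + k) M (Pmap u) =
      S.map ((Bu u : (Fin (n + k) → ℝ) →ₗ[ℝ] (Fin (n + k) → ℝ))) := by
    intro u hu
    have := chart_tangent hU hV hφ hψ hUV hψφ hφψ heq (hPmem u hu).1
    rwa [(hPmem u hu).2] at this
  have hABu : ∀ u ∈ Ω,
      (Bu u).comp (fderiv ℝ φ (Pmap u)) = ContinuousLinearMap.id ℝ _ ∧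
      (fderiv ℝ φ (Pmap u)).comp (Bu u) = ContinuousLinearMap.id ℝ _ := by
    intro u hu
    obtain ⟨hA, hB, hBA, hAB⟩ := chart_fderiv hU hV hφ hψ hUV hψφ hφψ (hPmem u hu).1.1
    rw [(hPmem u hu).2] at hBA hAB
    exact ⟨hBA, hAB⟩
  have hBuInj : ∀ u ∈ Ω, Function.Injective (Bu u) := by
    intro u hu
    have h := (hABu u hu).2
    intro a b hab
    have ha := ContinuousLinearMap.ext_iff.mp h a
    have hb := ContinuousLinearMap.ext_iff.mp h b
    simp only [ContinuousLinearMap.coe_comp', Function.comp_apply,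
      ContinuousLinearMap.coe_id', id_eq] at ha hb
    rw [← ha, ← hb, hab]
  have hψdiff : ∀ u ∈ Ω, HasFDerivAt ψ (Bu u) (w₀ + e u) := by
    intro u hu
    exact ((hψ.differentiableOn one_ne_zero _ hu).differentiableAt (hV.mem_nhds hu)).hasFDerivAt
  have haffd : ∀ u : Fin d → ℝ, HasFDerivAt (fun u' => w₀ + e u') eC u := by
    intro u
    exact eC.hasFDerivAt.const_add w₀
  have hPd : ∀ u ∈ Ω, HasFDerivAt Pmap ((Bu u).comp eC) u := by
    intro u hu
    exact (hψdiff u hu).comp u (haffd u)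
  let πn : (Fin (n + k) → ℝ) →L[ℝ] (Fin n → ℝ) := LinearMap.toContinuousLinearMap (projFst n k)
  have hπn : ∀ v, πn v = projFst n k v := fun v => rfl
  set Lq : (Fin d → ℝ) → ((Fin d → ℝ) →L[ℝ] (Fin n → ℝ)) :=
    fun u => πn.comp ((Bu u).comp eC) with hLqdef
  have hqd : ∀ u ∈ Ω, HasFDerivAt (fun u' => πn (Pmap u')) (Lq u) u := by
    intro u hu
    exact πn.hasFDerivAt.comp u (hPd u hu)
  have hLqrange : ∀ u ∈ Ω, LinearMap.range ((Lq u : (Fin d → ℝ) →ₗ[ℝ] (Fin n → ℝ))) =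
      (tangentSpaceAt (n + k) M (Pmap u)).map (projFst n k) := by
    intro u hu
    have hco : ((Lq u : (Fin d → ℝ) →L[ℝ] (Fin n → ℝ)) : (Fin d → ℝ) →ₗ[ℝ] (Fin n → ℝ))
        = (projFst n k).comp (((Bu u) : (Fin (n+k) → ℝ) →ₗ[ℝ] _).comp e) := by
      rfl
    rw [hco, LinearMap.range_comp, LinearMap.range_comp, range_extZero hdN, htang u hu]
  have hLqrank : ∀ u ∈ Ω,
      Module.finrank ℝ (LinearMap.range ((Lq u : (Fin d → ℝ) →ₗ[ℝ] (Fin n → ℝ)))) = l := by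
    intro u hu
    rw [hLqrange u hu]
    exact hrank _ (hPmem u hu).1.2
  have he0 : w₀ + e (0 : Fin d → ℝ) = w₀ := by rw [map_zero, add_zero]
  have hP0 : Pmap 0 = x := by
    simp only [hPdef, he0, hw₀def, map_zero, add_zero, hψφ x hxU]
  set Dp0 : (Fin d → ℝ) →L[ℝ] (Fin (n + k) → ℝ) := (Bu 0).comp eC with hDp0def
  have hDp0inj : Function.Injective Dp0 := by
    intro a b hab
    exact extZero_injective hdN (hBuInj 0 h0Ω hab)
  have hT : tangentSpaceAt (n + k) M x =
      LinearMap.range ((Dp0 : (Fin d → ℝ) →ₗ[ℝ] (Fin (n + k) → ℝ))) := by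
    have h1 := htang 0 h0Ω
    rw [hP0] at h1
    rw [h1]
    have hco : ((Dp0 : (Fin d → ℝ) →L[ℝ] (Fin (n+k) → ℝ)) : (Fin d → ℝ) →ₗ[ℝ] (Fin (n+k) → ℝ))
        = (((Bu 0) : (Fin (n+k) → ℝ) →ₗ[ℝ] (Fin (n+k) → ℝ)).comp e) := by
      rw [hDp0def]; rfl
    rw [hco, LinearMap.range_comp, range_extZero hdN]
  set E₂ : Submodule ℝ (Fin d → ℝ) := LinearMap.ker ((Lq 0 : (Fin d → ℝ) →ₗ[ℝ] (Fin n → ℝ)))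
    with hE₂def
  have hfinrankd : Module.finrank ℝ (Fin d → ℝ) = d := by
    simp [Module.finrank_pi]
  have hE₂rank : Module.finrank ℝ E₂ = d - l := by
    have hrn := LinearMap.finrank_range_add_finrank_ker
      ((Lq 0 : (Fin d → ℝ) →ₗ[ℝ] (Fin n → ℝ)))
    rw [hLqrank 0 h0Ω, hfinrankd] at hrn
    have : Module.finrank ℝ E₂ =
        Module.finrank ℝ (LinearMap.ker ((Lq 0 : (Fin d → ℝ) →ₗ[ℝ] (Fin n → ℝ)))) := rfl
    rw [this]
    omega
  set QL : (Fin d → ℝ) →ₗ[ℝ] (Fin (d - l) → ℝ) :=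
    (LinearMap.funLeft ℝ ℝ (fun j : Fin (d - l) => ι ⟨l + (j : ℕ), by omega⟩)).comp
      ((Dp0 : (Fin d → ℝ) →ₗ[ℝ] (Fin (n + k) → ℝ))) with hQLdef
  have hQLapply : ∀ v : Fin d → ℝ, ∀ j : Fin (d - l),
      QL v j = Dp0 v (ι ⟨l + (j : ℕ), by omega⟩) := fun v j => rfl
  have hLq0apply : ∀ v : Fin d → ℝ, ∀ i : Fin n, Lq 0 v i = Dp0 v (Fin.castAdd k i) :=
    fun v i => rfl
  have hQinj : ∀ v ∈ E₂, QL v = 0 → v = 0 := by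
    intro v hv hQv
    have hmT : Dp0 v ∈ tangentSpaceAt (n + k) M x := hT ▸ ⟨v, rfl⟩
    have hLq0v : Lq 0 v = 0 := hv
    have hproj : projAlong ι (Dp0 v) = 0 := by
      funext j
      show Dp0 v (ι j) = 0
      rcases lt_or_ge (j : ℕ) l with hj | hj
      · have hjn : (ι j : ℕ) < n := hιl j hj
        have hcast : Fin.castAdd k (⟨(ι j : ℕ), hjn⟩ : Fin n) = ι j := by
          apply Fin.ext; simp
        have := congrFun hLq0v (⟨(ι j : ℕ), hjn⟩ : Fin n)
        rw [hLq0apply v _, hcast] at this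
        exact this
      · have hjd : (j : ℕ) - l < d - l := by omega
        have := congrFun hQv (⟨(j : ℕ) - l, hjd⟩ : Fin (d - l))
        rw [hQLapply v _] at this
        have hfin : (⟨l + ((⟨(j : ℕ) - l, hjd⟩ : Fin (d - l)) : ℕ), by omega⟩ : Fin d) = j := by
          apply Fin.ext; simp; omega
        rw [hfin] at this
        exact this
    have hzero := himm x hzM (Dp0 v) hmT hproj
    apply hDp0inj
    rw [hzero, map_zero]
  set Qres : E₂ →ₗ[ℝ] (Fin (d - l) → ℝ) := QL.domRestrict E₂ with hQresdef
  have hQresInj : Function.Injective Qres := by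
    rw [injective_iff_map_eq_zero]
    intro a ha
    exact Subtype.ext (hQinj a a.2 ha)
  have hQresSurj : Function.Surjective Qres := by
    rw [← LinearMap.range_eq_top]
    apply Submodule.eq_top_of_finrank_eq
    rw [LinearMap.finrank_range_of_inj hQresInj, hE₂rank]
    simp [Module.finrank_pi]
  have hdl0 : 0 < d - l := by omega
  obtain ⟨ve, hve⟩ := hQresSurj (Pi.single (⟨0, hdl0⟩ : Fin (d - l)) 1)
  set vh : Fin d → ℝ := (ve : Fin d → ℝ) with hvhdef
  have hvhE : Lq 0 vh = 0 := ve.2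
  have hvh1 : Dp0 vh (ι ⟨l, hld⟩) = 1 := by
    have := congrFun hve (⟨0, hdl0⟩ : Fin (d - l))
    have hQv : Qres ve (⟨0, hdl0⟩ : Fin (d-l)) = QL vh (⟨0, hdl0⟩ : Fin (d-l)) := rfl
    rw [hQv, hQLapply vh _] at this
    have hfin : (⟨l + ((⟨0, hdl0⟩ : Fin (d - l)) : ℕ), by omega⟩ : Fin d) = ⟨l, hld⟩ := by
      apply Fin.ext; simp
    rw [hfin] at this
    rw [this]
    simp
  have hnι : n ≤ (ι ⟨l, hld⟩ : ℕ) := by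
    by_contra hlt
    push_neg at hlt
    have hcast : Fin.castAdd k (⟨(ι ⟨l, hld⟩ : ℕ), hlt⟩ : Fin n) = ι ⟨l, hld⟩ := by
      apply Fin.ext; simp
    have := congrFun hvhE (⟨(ι ⟨l, hld⟩ : ℕ), hlt⟩ : Fin n)
    rw [hLq0apply vh _, hcast, hvh1] at this
    simp at this
  have hcval : (ι ⟨l, hld⟩ : ℕ) - n < k := by
    have := (ι ⟨l, hld⟩).2
    omega
  have hc : Fin.natAdd n (⟨(ι ⟨l, hld⟩ : ℕ) - n, hcval⟩ : Fin k) = ι ⟨l, hld⟩ := by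
    apply Fin.ext
    simp only [Fin.natAdd]
    omega
  refine ⟨⟨(ι ⟨l, hld⟩ : ℕ) - n, hcval⟩, hc, ?_⟩
  -- Step 2 : the constant-rank argument via the inverse function theorem
  set R : Submodule ℝ (Fin n → ℝ) := LinearMap.range ((Lq 0 : (Fin d → ℝ) →ₗ[ℝ] (Fin n → ℝ)))
    with hRdef
  obtain ⟨R', hR'⟩ := Submodule.exists_isCompl R
  obtain ⟨E₁, hE₁⟩ := Submodule.exists_isCompl E₂
  set πR : (Fin n → ℝ) →ₗ[ℝ] R := R.linearProjOfIsCompl R' hR' with hπRdef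
  set π₂ : (Fin d → ℝ) →ₗ[ℝ] E₂ := E₂.linearProjOfIsCompl E₁ hE₁ with hπ₂def
  let πRC : (Fin n → ℝ) →L[ℝ] R := LinearMap.toContinuousLinearMap πR
  let π₂C : (Fin d → ℝ) →L[ℝ] E₂ := LinearMap.toContinuousLinearMap π₂
  set cP : ((Fin n → ℝ) × (Fin d → ℝ)) →L[ℝ] (↥R × ↥E₂) :=
    (πRC.comp (ContinuousLinearMap.fst ℝ _ _)).prod
      (π₂C.comp (ContinuousLinearMap.snd ℝ _ _)) with hcPdef
  set Λ : (Fin d → ℝ) → ((Fin d → ℝ) →L[ℝ] (↥R × ↥E₂)) :=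
    fun u => cP.comp ((Lq u).prod (ContinuousLinearMap.id ℝ (Fin d → ℝ))) with hΛdef
  have hΛapply : ∀ u v, Λ u v = (πR (Lq u v), π₂ v) := fun u v => rfl
  set g : (Fin d → ℝ) → (↥R × ↥E₂) := fun u => (πR (πn (Pmap u)), π₂ u) with hgdef
  have hgd : ∀ u ∈ Ω, HasFDerivAt g (Λ u) u := by
    intro u hu
    have h1 : HasFDerivAt (fun u' => (πn (Pmap u'), u'))
        ((Lq u).prod (ContinuousLinearMap.id ℝ (Fin d → ℝ))) u :=
      (hqd u hu).prodMk (hasFDerivAt_id u)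
    exact cP.hasFDerivAt.comp u h1
  -- bijectivity of `Λ 0`
  have hΛ0ker : ∀ v, Λ 0 v = 0 → v = 0 := by
    intro v hv
    have hv1 : πR (Lq 0 v) = 0 := congrArg Prod.fst hv
    have hv2 : π₂ v = 0 := congrArg Prod.snd hv
    have hmem : Lq 0 v ∈ R := ⟨v, rfl⟩
    have h1 : πR (Lq 0 v) = ⟨Lq 0 v, hmem⟩ :=
      Submodule.linearProjOfIsCompl_apply_left hR' ⟨Lq 0 v, hmem⟩
    have hLq0 : Lq 0 v = 0 := by
      have := h1.symm.trans hv1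
      exact congrArg Subtype.val this
    have hvE₂ : v ∈ E₂ := hLq0
    have h2 : π₂ v = ⟨v, hvE₂⟩ :=
      Submodule.linearProjOfIsCompl_apply_left hE₁ ⟨v, hvE₂⟩
    have := h2.symm.trans hv2
    exact congrArg Subtype.val this
  have hΛ0inj : Function.Injective (Λ 0) := by
    intro a b hab
    have := hΛ0ker (a - b) (by rw [map_sub, hab, sub_self])
    exact sub_eq_zero.mp this
  have hprodrank : Module.finrank ℝ (↥R × ↥E₂) = d := by
    rw [Module.finrank_prod, hE₂rank]
    have : Module.finrank ℝ R = l := hLqrank 0 h0Ω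
    rw [this]
    omega
  have hΛ0bij : Function.Bijective (Λ 0) := by
    refine ⟨hΛ0inj, ?_⟩
    have hinj' : Function.Injective ((Λ 0 : (Fin d → ℝ) →ₗ[ℝ] (↥R × ↥E₂))) := hΛ0inj
    have hrange : LinearMap.range ((Λ 0 : (Fin d → ℝ) →ₗ[ℝ] (↥R × ↥E₂))) = ⊤ := by
      apply Submodule.eq_top_of_finrank_eq
      rw [LinearMap.finrank_range_of_inj hinj', hprodrank, hfinrankd]
    exact LinearMap.range_eq_top.mp hrange
  let ΛE0 : (Fin d → ℝ) ≃L[ℝ] (↥R × ↥E₂) :=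
    (LinearEquiv.ofBijective ((Λ 0 : (Fin d → ℝ) →ₗ[ℝ] (↥R × ↥E₂))) hΛ0bij).toContinuousLinearEquiv
  have hΛE0coe : ∀ v, ΛE0 v = Λ 0 v := fun v => rfl
  set D : (Fin d → ℝ) → ((Fin d → ℝ) →L[ℝ] (Fin d → ℝ)) :=
    fun u => ((ΛE0.symm : (↥R × ↥E₂) →L[ℝ] (Fin d → ℝ)).comp (Λ u)) with hDdef
  have hDapp : ∀ u v, D u v = ΛE0.symm (Λ u v) := fun u v => rfl
  have hD0 : ∀ v, D 0 v = v := by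
    intro v
    rw [hDapp, ← hΛE0coe v, ΛE0.symm_apply_apply]
  -- continuity of the determinant
  have hfdc : ContinuousOn (fderiv ℝ ψ) V := hψ.continuousOn_fderiv_of_isOpen hV le_rfl
  have hBucont : ContinuousOn Bu Ω := by
    refine ContinuousOn.comp hfdc hcontaff.continuousOn ?_
    intro u hu
    exact hu
  have hDappcont : ∀ w : Fin d → ℝ, ContinuousOn (fun u => D u w) Ω := by
    intro w
    have h1 : ContinuousOn (fun u => (Bu u) (e w)) Ω :=
      (ContinuousLinearMap.apply ℝ (Fin (n + k) → ℝ) (e w)).continuous.comp_continuousOn hBucont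
    have h2 : ContinuousOn (fun u => ΛE0.symm (cP (πn ((Bu u) (e w)), w))) Ω :=
      (ΛE0.symm.continuous.comp cP.continuous).comp_continuousOn
        ((πn.continuous.comp_continuousOn h1).prodMk continuousOn_const)
    exact h2
  let bas := Pi.basisFun ℝ (Fin d)
  set dets : (Fin d → ℝ) → ℝ := fun u =>
    (LinearMap.toMatrix bas bas ((D u : (Fin d → ℝ) →ₗ[ℝ] (Fin d → ℝ)))).det with hdetsdef
  have hdetscont : ContinuousOn dets Ω := by
    have hmat : ContinuousOn (fun u => (LinearMap.toMatrix bas bas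
        ((D u : (Fin d → ℝ) →ₗ[ℝ] (Fin d → ℝ))))) Ω := by
      apply continuousOn_pi.mpr
      intro i
      apply continuousOn_pi.mpr
      intro j
      have hentry : ∀ u, (LinearMap.toMatrix bas bas
          ((D u : (Fin d → ℝ) →ₗ[ℝ] (Fin d → ℝ)))) i j = D u (bas j) i := by
        intro u
        rw [LinearMap.toMatrix_apply]
        simp [bas]
      simp only [hentry]
      exact (continuous_apply i).comp_continuousOn (hDappcont (bas j))
    have hdetcont : Continuous fun m : Matrix (Fin d) (Fin d) ℝ => m.det :=
      Continuous.matrix_det continuous_id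
    exact hdetcont.comp_continuousOn hmat
  have hdets0 : dets 0 ≠ 0 := by
    have hD0L : ((D 0 : (Fin d → ℝ) →ₗ[ℝ] (Fin d → ℝ))) = LinearMap.id := by
      apply LinearMap.ext
      intro v
      exact hD0 v
    rw [hdetsdef]
    simp only [hD0L, LinearMap.toMatrix_id, Matrix.det_one]
    exact one_ne_zero
  set N₀ : Set (Fin d → ℝ) := Ω ∩ dets ⁻¹' ({0}ᶜ) with hN₀def
  have hN₀open : IsOpen N₀ := hdetscont.isOpen_inter_preimage hΩopen (isOpen_compl_singleton)
  have h0N₀ : (0 : Fin d → ℝ) ∈ N₀ := ⟨h0Ω, hdets0⟩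
  have hN₀Ω : ∀ u ∈ N₀, u ∈ Ω := fun u hu => hu.1
  -- an inverse for `Λ u`, `u ∈ N₀`
  have hΛbij : ∀ u ∈ N₀, Function.Bijective (Λ u) := by
    intro u hu
    have hdet : IsUnit (LinearMap.toMatrix bas bas
        ((D u : (Fin d → ℝ) →ₗ[ℝ] (Fin d → ℝ)))).det := isUnit_iff_ne_zero.mpr hu.2
    have hDbij : Function.Bijective (D u) := by
      have hb := (LinearEquiv.ofIsUnitDet hdet).bijective
      have hco : ⇑(LinearEquiv.ofIsUnitDet hdet) = ⇑(D u) := by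
        funext v
        rw [LinearEquiv.ofIsUnitDet_apply]
        rfl
      rwa [hco] at hb
    have hfun : ⇑(Λ u) = fun v => ΛE0 (D u v) := by
      funext v
      rw [hDapp, ΛE0.apply_symm_apply]
    rw [hfun]
    exact ΛE0.bijective.comp hDbij
  have hΛEex : ∀ u, u ∈ N₀ → ∃ Eq : (Fin d → ℝ) ≃L[ℝ] (↥R × ↥E₂), ∀ v, Eq v = Λ u v := by
    intro u hu
    exact ⟨(LinearEquiv.ofBijective ((Λ u : (Fin d → ℝ) →ₗ[ℝ] (↥R × ↥E₂)))
      (hΛbij u hu)).toContinuousLinearEquiv, fun v => rfl⟩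
  choose ΛE hΛE using hΛEex
  have hcoeclm : ∀ u, ∀ hu : u ∈ N₀, ((ΛE u hu : (Fin d → ℝ) ≃L[ℝ] (↥R × ↥E₂)) :
      (Fin d → ℝ) →L[ℝ] (↥R × ↥E₂)) = Λ u := by
    intro u hu
    apply ContinuousLinearMap.ext
    intro v
    exact hΛE u hu v
  -- the inverse function theorem at `0`
  have hgC1 : ContDiffAt ℝ 1 g 0 := by
    have hψC : ContDiffAt ℝ 1 ψ (w₀ + e 0) := hψ.contDiffAt (hV.mem_nhds h0Ω)
    have haffC : ContDiffAt ℝ 1 (fun u : Fin d → ℝ => w₀ + e u) 0 := by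
      have : ContDiff ℝ 1 (fun u : Fin d → ℝ => w₀ + eC u) := contDiff_const.add eC.contDiff
      exact this.contDiffAt
    have hPC : ContDiffAt ℝ 1 Pmap 0 := hψC.comp 0 haffC
    have h1 : ContDiffAt ℝ 1 (fun u => (πn (Pmap u), u)) 0 :=
      ((πn.contDiff.contDiffAt).comp 0 hPC).prodMk contDiffAt_id
    exact (cP.contDiff.contDiffAt).comp 0 h1
  have hfd0 : HasFDerivAt g ((ΛE 0 h0N₀ : (Fin d → ℝ) ≃L[ℝ] (↥R × ↥E₂)) :
      (Fin d → ℝ) →L[ℝ] (↥R × ↥E₂)) 0 := by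
    rw [hcoeclm 0 h0N₀]
    exact hgd 0 h0Ω
  set PH := hgC1.toOpenPartialHomeomorph g hfd0 one_ne_zero with hPHdef
  have hPHcoe : (PH : (Fin d → ℝ) → (↥R × ↥E₂)) = g :=
    ContDiffAt.toOpenPartialHomeomorph_coe hgC1 hfd0 one_ne_zero
  have hsource : (0 : Fin d → ℝ) ∈ PH.source :=
    ContDiffAt.mem_toOpenPartialHomeomorph_source hgC1 hfd0 one_ne_zero
  have htarget : g 0 ∈ PH.target :=
    ContDiffAt.image_mem_toOpenPartialHomeomorph_target hgC1 hfd0 one_ne_zero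
  have hleft : PH.symm (g 0) = 0 := by
    have := PH.left_inv hsource
    rwa [show PH 0 = g 0 from congrFun hPHcoe 0] at this
  have hright : ∀ wq ∈ PH.target, g (PH.symm wq) = wq := by
    intro wq hw
    have := PH.right_inv hw
    rwa [show PH (PH.symm wq) = g (PH.symm wq) from congrFun hPHcoe _] at this
  have hsymmcont : ContinuousOn PH.symm PH.target := PH.continuousOn_symm
  set Wset : Set (↥R × ↥E₂) := PH.target ∩ PH.symm ⁻¹' N₀ with hWdef
  have hWopen : IsOpen Wset := hsymmcont.isOpen_inter_preimage PH.open_target hN₀open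
  have hg0W : g 0 ∈ Wset := ⟨htarget, by simp only [Set.mem_preimage, hleft]; exact h0N₀⟩
  obtain ⟨δ, hδpos, hball⟩ := Metric.isOpen_iff.mp hWopen (g 0) hg0W
  set bp : ↥R × ↥E₂ := (0, ve) with hbpdef
  set ε : ℝ := δ / (2 * (‖bp‖ + 1)) with hεdef
  have hb1 : (0 : ℝ) < ‖bp‖ + 1 := by positivity
  have hεpos : 0 < ε := by
    rw [hεdef]
    positivity
  have hmemball : ∀ t ∈ Set.Icc (-ε) ε, g 0 + t • bp ∈ Metric.ball (g 0) δ := by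
    intro t ht
    have hdd : dist (g 0 + t • bp) (g 0) = |t| * ‖bp‖ := by
      rw [dist_eq_norm, add_sub_cancel_left]
      rw [show |t| = ‖t‖ from (Real.norm_eq_abs t).symm]
      exact norm_smul t bp
    rw [Metric.mem_ball, hdd]
    have habs : |t| ≤ ε := abs_le.mpr ⟨ht.1, ht.2⟩
    have h1 : |t| * ‖bp‖ ≤ ε * (‖bp‖ + 1) := by
      apply mul_le_mul habs (by linarith) (norm_nonneg _) (le_of_lt hεpos)
    have h2 : ε * (‖bp‖ + 1) = δ / 2 := by
      rw [hεdef, div_mul_eq_mul_div, mul_comm (2 : ℝ) (‖bp‖ + 1),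
        ← div_div, mul_div_assoc, div_self (ne_of_gt hb1), mul_one]
    rw [h2] at h1
    linarith
  set κ : ℝ → (Fin d → ℝ) := fun t => PH.symm (g 0 + t • bp) with hκdef
  have hκW : ∀ t ∈ Set.Icc (-ε) ε, g 0 + t • bp ∈ Wset := fun t ht => hball (hmemball t ht)
  have hκN₀ : ∀ t ∈ Set.Icc (-ε) ε, κ t ∈ N₀ := fun t ht => (hκW t ht).2
  have hκΩ : ∀ t ∈ Set.Icc (-ε) ε, κ t ∈ Ω := fun t ht => (hκN₀ t ht).1
  have hκcont : ContinuousOn κ (Set.Icc (-ε) ε) := by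
    refine hsymmcont.comp ((continuous_const.add (continuous_id.smul continuous_const)).continuousOn) ?_
    intro t ht
    exact (hκW t ht).1
  have haffd2 : ∀ t : ℝ, HasDerivAt (fun s : ℝ => g 0 + s • bp) bp t := by
    intro t
    simpa using ((hasDerivAt_id t).smul_const bp).const_add (g 0)
  have hκd : ∀ t, ∀ ht : t ∈ Set.Icc (-ε) ε,
      HasDerivAt κ ((ΛE (κ t) (hκN₀ t ht)).symm bp) t := by
    intro t ht
    have hC : ContinuousAt PH.symm (g 0 + t • bp) :=
      hsymmcont.continuousAt (PH.open_target.mem_nhds (hκW t ht).1)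
    have hfd : HasFDerivAt g ((ΛE (κ t) (hκN₀ t ht) : (Fin d → ℝ) ≃L[ℝ] (↥R × ↥E₂)) :
        (Fin d → ℝ) →L[ℝ] (↥R × ↥E₂)) (PH.symm (g 0 + t • bp)) := by
      rw [hcoeclm]
      exact hgd _ (hκΩ t ht)
    have hev : ∀ᶠ wq in nhds (g 0 + t • bp), g (PH.symm wq) = wq :=
      Filter.eventually_of_mem (PH.open_target.mem_nhds (hκW t ht).1) hright
    have hinv : HasFDerivAt PH.symm (((ΛE (κ t) (hκN₀ t ht)).symm : (↥R × ↥E₂) ≃L[ℝ] _) :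
        (↥R × ↥E₂) →L[ℝ] (Fin d → ℝ)) (g 0 + t • bp) :=
      HasFDerivAt.of_local_left_inverse hC hfd hev
    exact hinv.comp_hasDerivAt t (haffd2 t)
  -- the projection of the curve to the first `n` coordinates is constant
  have hQzero : ∀ t, ∀ ht : t ∈ Set.Icc (-ε) ε,
      Lq (κ t) ((ΛE (κ t) (hκN₀ t ht)).symm bp) = 0 := by
    intro t ht
    set u := κ t with hudef
    have huN : u ∈ N₀ := hκN₀ t ht
    have huΩ : u ∈ Ω := hκΩ t ht
    set vt : Fin d → ℝ := (ΛE u huN).symm bp with hvtdef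
    have hΛvt : Λ u vt = bp := by
      rw [← hΛE u huN vt, hvtdef, (ΛE u huN).apply_symm_apply]
    have hπR0 : πR (Lq u vt) = 0 := by
      have := congrArg Prod.fst hΛvt
      simpa [hΛapply] using this
    set J : ↥R →ₗ[ℝ] (Fin n → ℝ) :=
      ((Lq u : (Fin d → ℝ) →ₗ[ℝ] (Fin n → ℝ)).comp
        ((((ΛE u huN).symm : (↥R × ↥E₂) →L[ℝ] (Fin d → ℝ)) :
          (↥R × ↥E₂) →ₗ[ℝ] (Fin d → ℝ)).comp (LinearMap.inl ℝ ↥R ↥E₂))) with hJdef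
    have hJapp : ∀ a : ↥R, J a = Lq u ((ΛE u huN).symm (a, 0)) := fun a => rfl
    have hJval : ∀ a : ↥R, πR (J a) = a := by
      intro a
      have h1 : Λ u ((ΛE u huN).symm (a, 0)) = (a, 0) := by
        rw [← hΛE u huN, (ΛE u huN).apply_symm_apply]
      have h2 := congrArg Prod.fst h1
      simpa [hΛapply, hJapp] using h2
    have hJinj : Function.Injective J := by
      intro a b hab
      rw [← hJval a, ← hJval b, hab]
    have hW1le : LinearMap.range J ≤ LinearMap.range ((Lq u : (Fin d → ℝ) →ₗ[ℝ] (Fin n → ℝ))) := by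
      rintro - ⟨a, rfl⟩
      exact ⟨(ΛE u huN).symm (a, 0), rfl⟩
    have hW1eq : LinearMap.range J = LinearMap.range ((Lq u : (Fin d → ℝ) →ₗ[ℝ] (Fin n → ℝ))) := by
      apply Submodule.eq_of_le_of_finrank_le hW1le
      rw [hLqrank u huΩ, LinearMap.finrank_range_of_inj hJinj]
      have : Module.finrank ℝ R = l := hLqrank 0 h0Ω
      rw [this]
    have hmem : Lq u vt ∈ LinearMap.range J := by
      rw [hW1eq]
      exact ⟨vt, rfl⟩
    obtain ⟨a, ha⟩ := hmem
    have ha0 : a = 0 := by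
      have := congrArg πR ha
      rw [hJval a, hπR0] at this
      exact this
    rw [← ha, ha0, map_zero]
  have h0Icc : (0 : ℝ) ∈ Set.Icc (-ε) ε := by
    constructor <;> [linarith; linarith]
  have hQconst : ∀ t ∈ Set.Icc (-ε) ε, πn (Pmap (κ t)) = πn (Pmap (κ 0)) := by
    intro t ht
    have hder : ∀ s ∈ Set.Icc (-ε) ε, HasFDerivWithinAt (fun t' => πn (Pmap (κ t')))
        (0 : ℝ →L[ℝ] (Fin n → ℝ)) (Set.Icc (-ε) ε) s := by
      intro s hs
      have h1 : HasDerivAt (fun t' => πn (Pmap (κ t'))) (Lq (κ s) ((ΛE (κ s) (hκN₀ s hs)).symm bp)) s :=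
        (hqd (κ s) (hκΩ s hs)).comp_hasDerivAt s (hκd s hs)
      rw [hQzero s hs] at h1
      have h2 : HasFDerivAt (fun t' => πn (Pmap (κ t')))
          (ContinuousLinearMap.smulRight (1 : ℝ →L[ℝ] ℝ) (0 : Fin n → ℝ)) s :=
        hasDerivAt_iff_hasFDerivAt.mp h1
      have h3 : ContinuousLinearMap.smulRight (1 : ℝ →L[ℝ] ℝ) (0 : Fin n → ℝ) =
          (0 : ℝ →L[ℝ] (Fin n → ℝ)) := by
        ext v
        simp
      rw [h3] at h2
      exact h2.hasFDerivWithinAt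
    have hbound : ∀ s ∈ Set.Icc (-ε) ε, ‖(0 : ℝ →L[ℝ] (Fin n → ℝ))‖ ≤ 0 := by
      intro s _
      simp
    have := Convex.norm_image_sub_le_of_norm_hasFDerivWithin_le hder hbound
      (convex_Icc (-ε) ε) h0Icc ht
    rw [zero_mul] at this
    have h4 : πn (Pmap (κ t)) - πn (Pmap (κ 0)) = 0 := by
      have := le_antisymm this (norm_nonneg _)
      exact norm_eq_zero.mp this
    exact sub_eq_zero.mp h4
  have hκ0 : κ 0 = 0 := by
    have : g 0 + (0 : ℝ) • bp = g 0 := by rw [zero_smul, add_zero]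
    rw [hκdef]
    simp only [this]
    exact hleft
  have hπnx : ∀ i : Fin n, πn x i = y i := by
    intro i
    show x (Fin.castAdd k i) = y i
    rw [hxdef]
    exact Fin.append_left y z i
  have hπnΓ : ∀ t ∈ Set.Icc (-ε) ε, ∀ i : Fin n, Pmap (κ t) (Fin.castAdd k i) = y i := by
    intro t ht i
    have h1 := congrFun (hQconst t ht) i
    have h2 : πn (Pmap (κ 0)) i = y i := by
      rw [hκ0, hP0]
      exact hπnx i
    exact h1.trans h2
  set γ : ℝ → (Fin k → ℝ) := fun t => fun i => Pmap (κ t) (Fin.natAdd n i) with hγdef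
  have happend : ∀ t ∈ Set.Icc (-ε) ε, Fin.append y (γ t) = Pmap (κ t) := by
    intro t ht
    funext i
    refine Fin.addCases (fun i0 => ?_) (fun i1 => ?_) i
    · rw [Fin.append_left]
      exact (hπnΓ t ht i0).symm
    · rw [Fin.append_right]
  have hγM : ∀ t ∈ Set.Icc (-ε) ε, Fin.append y (γ t) ∈ M := by
    intro t ht
    rw [happend t ht]
    exact (hPmem (κ t) (hκΩ t ht)).1.2
  have hγ0 : γ 0 = z := by
    funext i
    show Pmap (κ 0) (Fin.natAdd n i) = z i
    rw [hκ0, hP0, hxdef]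
    exact Fin.append_right y z i
  -- the velocity at time 0
  have hbpvh : Λ 0 vh = bp := by
    rw [hΛapply]
    have h1 : πR (Lq 0 vh) = 0 := by rw [hvhE, map_zero]
    have h2 : π₂ vh = ve := Submodule.linearProjOfIsCompl_apply_left hE₁ ve
    rw [h1, h2, hbpdef]
  have hvel : (ΛE (κ 0) (hκN₀ 0 h0Icc)).symm bp = vh := by
    rw [(ΛE (κ 0) (hκN₀ 0 h0Icc)).symm_apply_eq]
    rw [hΛE (κ 0) (hκN₀ 0 h0Icc) vh]
    rw [show Λ (κ 0) vh = Λ 0 vh from congrArg (fun u => Λ u vh) hκ0]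
    exact hbpvh.symm
  have hP0' : HasFDerivAt Pmap Dp0 (κ 0) := by
    rw [hκ0]
    exact hPd 0 h0Ω
  have hΓd : HasDerivAt (fun t => Pmap (κ t)) (Dp0 vh) 0 := by
    have h1 := hP0'.comp_hasDerivAt 0 (hκd 0 h0Icc)
    rwa [hvel] at h1
  let prk : (Fin (n + k) → ℝ) →L[ℝ] (Fin k → ℝ) :=
    LinearMap.toContinuousLinearMap (LinearMap.funLeft ℝ ℝ (Fin.natAdd n))
  have hγd : HasDerivAt γ (fun i => Dp0 vh (Fin.natAdd n i)) 0 :=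
    prk.hasFDerivAt.comp_hasDerivAt 0 hΓd
  have hwc : (fun i => Dp0 vh (Fin.natAdd n i)) ⟨(ι ⟨l, hld⟩ : ℕ) - n, hcval⟩ ≠ 0 := by
    show Dp0 vh (Fin.natAdd n ⟨(ι ⟨l, hld⟩ : ℕ) - n, hcval⟩) ≠ 0
    rw [hc, hvh1]
    exact one_ne_zero
  have hγcont : ContinuousOn γ (Set.Icc (-ε) ε) := by
    have hΓcont : ContinuousOn (fun t => Pmap (κ t)) (Set.Icc (-ε) ε) := by
      have hinner : ContinuousOn (fun t => w₀ + e (κ t)) (Set.Icc (-ε) ε) :=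
        hcontaff.comp_continuousOn hκcont
      refine ContinuousOn.comp hψ.continuousOn hinner ?_
      intro t ht
      exact hκΩ t ht
    exact prk.continuous.comp_continuousOn hΓcont
  exact ⟨ε, hεpos, γ, (fun i => Dp0 vh (Fin.natAdd n i)), hγ0, hγcont, hγM, hγd, hwc⟩


end FiberFrontier

/-- Let `M ⊆ ℝ^{n+k}` be a bounded `d`-dimensional C¹ submanifold such that
`Π_n ↾ M` has constant rank `l < d`, and suppose there is a strictly increasing
`ι : {1,…,d} → {1,…,n+k}` with `ι(l) ≤ n` such that `Π_ι ↾ M` is an immersion.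
Then every connected component of every fiber of `Π_n ↾ M` has nonempty frontier. -/
theorem fiber_component_frontier_nonempty (n k d l : ℕ) (hn : 1 ≤ n)
    (M : Set (Fin (n + k) → ℝ)) (hbd : Bornology.IsBounded M)
    (hM : IsC1Submanifold (n + k) d M)
    (hrank : ∀ z ∈ M,
      Module.finrank ℝ ((tangentSpaceAt (n + k) M z).map (projFst n k)) = l)
    (hld : l < d)
    (ι : Fin d → Fin (n + k)) (hι : StrictMono ι)
    (hιl : ∀ j : Fin d, (j : ℕ) < l → (ι j : ℕ) < n)
    (himm : ∀ z ∈ M, ∀ v ∈ tangentSpaceAt (n + k) M z, projAlong ι v = 0 → v = 0) :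
    ∀ y ∈ (projFst n k) '' M, ∀ z ∈ {z : Fin k → ℝ | Fin.append y z ∈ M},
      (closure (connectedComponentIn {z : Fin k → ℝ | Fin.append y z ∈ M} z) \
        connectedComponentIn {z : Fin k → ℝ | Fin.append y z ∈ M} z).Nonempty := by
  intro y hy z₀ hz₀
  set F : Set (Fin k → ℝ) := {z : Fin k → ℝ | Fin.append y z ∈ M} with hFdef
  by_contra hcon
  rw [Set.not_nonempty_iff_eq_empty, Set.diff_eq_empty] at hcon
  have hclosed : IsClosed (connectedComponentIn F z₀) := isClosed_of_closure_subset hcon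
  obtain ⟨r, hr⟩ := hbd.subset_closedBall (0 : Fin (n + k) → ℝ)
  have hFbd : F ⊆ Metric.closedBall 0 r := by
    intro zz hzz
    rw [Metric.mem_closedBall, dist_zero_right]
    have h1 : ‖Fin.append y zz‖ ≤ r := by
      have := hr hzz
      rwa [Metric.mem_closedBall, dist_zero_right] at this
    have h2 : ‖zz‖ ≤ ‖Fin.append y zz‖ := by
      apply (pi_norm_le_iff_of_nonneg (norm_nonneg _)).mpr
      intro i
      have h3 := norm_le_pi_norm (Fin.append y zz) (Fin.natAdd n i)
      rwa [Fin.append_right] at h3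
    linarith
  have hCcompact : IsCompact (connectedComponentIn F z₀) := by
    exact Metric.isCompact_of_isClosed_isBounded hclosed
      (Metric.isBounded_closedBall.subset ((connectedComponentIn_subset F z₀).trans hFbd))
  have hz₀C : z₀ ∈ connectedComponentIn F z₀ := mem_connectedComponentIn hz₀
  obtain ⟨c, hc, -⟩ := FiberFrontier.key hld hM hrank ι hι hιl himm hz₀
  obtain ⟨zs, hzsC, hmax⟩ := hCcompact.exists_isMaxOn ⟨z₀, hz₀C⟩
    ((continuous_apply c).continuousOn)
  have hzsF : zs ∈ F := connectedComponentIn_subset F z₀ hzsC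
  obtain ⟨c', hc', ε, hεpos, γ, w, hγ0, hγcont, hγM, hγd, hwc⟩ :=
    FiberFrontier.key hld hM hrank ι hι hιl himm hzsF
  have hcc : c' = c := by
    apply Fin.ext
    have := congrArg Fin.val (hc'.trans hc.symm)
    simpa using this
  have h0Icc : (0 : ℝ) ∈ Set.Icc (-ε) ε := ⟨by linarith, by linarith⟩
  have hγC : ∀ t ∈ Set.Icc (-ε) ε, γ t ∈ connectedComponentIn F z₀ := by
    intro t ht
    have hsubIcc : Set.uIcc 0 t ⊆ Set.Icc (-ε) ε :=
      (Set.ordConnected_Icc).uIcc_subset h0Icc ht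
    have hJconn : IsPreconnected (γ '' Set.uIcc 0 t) :=
      (isPreconnected_uIcc).image γ (hγcont.mono hsubIcc)
    have hJF : γ '' Set.uIcc 0 t ⊆ F := by
      rintro - ⟨s, hs, rfl⟩
      exact hγM s (hsubIcc hs)
    have hzsJ : zs ∈ γ '' Set.uIcc 0 t := ⟨0, Set.left_mem_uIcc, hγ0⟩
    have hsub := hJconn.subset_connectedComponentIn hzsJ hJF
    rw [connectedComponentIn_eq hzsC]
    exact hsub ⟨t, Set.right_mem_uIcc, rfl⟩
  have hlocmax : IsLocalMax (fun t => γ t c) 0 := by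
    have hIccnhds : Set.Icc (-ε) ε ∈ nhds (0 : ℝ) :=
      Icc_mem_nhds (by linarith) hεpos
    filter_upwards [hIccnhds] with t ht
    have := (isMaxOn_iff.mp hmax) (γ t) (hγC t ht)
    simpa [hγ0] using this
  have hdc : HasDerivAt (fun t => γ t c) (w c) 0 := by
    have h := (ContinuousLinearMap.proj (R := ℝ) (φ := fun _ : Fin k => ℝ)
      c).hasFDerivAt.comp_hasDerivAt 0 hγd
    exact h
  have hwzero : w c = 0 := hlocmax.hasDerivAt_eq_zero hdc
  rw [hcc] at hwc
  exact hwc hwzero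
end

section
/- Let n ≥ 1, q ≥ 0, let r ∈ (0, ∞)ⁿ and let U = (−r₁, r₁) × ⋯ × (−rₙ, rₙ). Let f : U → ℝ be a C^{q+1} function such that for every 0 ≤ k ≤ q and every x ∈ U with xₙ = 0, the k-th partial derivative ∂ᵏf/∂xₙᵏ(x) = 0. Then there exists a continuous function g : U → ℝ such that f(x) = xₙ^{q+1}·g(x) for every x ∈ U, and g(x) = (1/(q+1)!)·∂^{q+1}f/∂xₙ^{q+1}(x) for every x ∈ U with xₙ = 0. -/
/-- Partial derivative in the last variable of a function on `ℝ^{n+1}`. -/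
noncomputable def pderivLast (n : ℕ) (f : (Fin (n + 1) → ℝ) → ℝ) :
    (Fin (n + 1) → ℝ) → ℝ :=
  fun x => fderiv ℝ f x (Pi.single (Fin.last n) 1)



lemma isOpen_polydisk {m : ℕ} (r : Fin m → ℝ) :
    IsOpen {x : Fin m → ℝ | ∀ i, |x i| < r i} := by
  have : {x : Fin m → ℝ | ∀ i, |x i| < r i}
      = Set.univ.pi fun i => Set.Ioo (-(r i)) (r i) := by
    ext x; simp [abs_lt]
  rw [this]
  exact isOpen_set_pi Set.finite_univ fun i _ => isOpen_Ioo

lemma update_mem_polydisk {n : ℕ} {r : Fin (n + 1) → ℝ} {x : Fin (n + 1) → ℝ}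
    (hx : x ∈ {x : Fin (n + 1) → ℝ | ∀ i, |x i| < r i}) {t : ℝ}
    (ht : |t| < r (Fin.last n)) :
    Function.update x (Fin.last n) t ∈ {x : Fin (n + 1) → ℝ | ∀ i, |x i| < r i} := by
  intro i
  rcases eq_or_ne i (Fin.last n) with h | h
  · subst h; simpa using ht
  · simpa [Function.update_apply, h] using hx i

lemma iter_contDiffOn {n q : ℕ} {r : Fin (n + 1) → ℝ} {f : (Fin (n + 1) → ℝ) → ℝ}
    (hf : ContDiffOn ℝ (q + 1 : ℕ) f {x | ∀ i, |x i| < r i}) :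
    ∀ k, k ≤ q + 1 →
      ContDiffOn ℝ ((q + 1 - k : ℕ)) ((pderivLast n)^[k] f) {x | ∀ i, |x i| < r i} := by
  intro k
  induction k with
  | zero => intro _; simpa using hf
  | succ k ih =>
    intro hk
    have hk' : k ≤ q + 1 := by omega
    have hP := ih hk'
    rw [Function.iterate_succ_apply']
    intro x hx
    have hxat : ContDiffAt ℝ ((q + 1 - k : ℕ)) ((pderivLast n)^[k] f) x :=
      hP.contDiffAt ((isOpen_polydisk r).mem_nhds hx)
    have hle : ((q + 1 - (k + 1) : ℕ) : WithTop ℕ∞) + 1 ≤ ((q + 1 - k : ℕ) : WithTop ℕ∞) := by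
      norm_cast; omega
    have := (hxat.fderiv_right hle).clm_apply
      (contDiffAt_const (c := Pi.single (Fin.last n) (1 : ℝ)))
    exact this.contDiffWithinAt

lemma hasDerivAt_comp_update {n : ℕ} {g : (Fin (n + 1) → ℝ) → ℝ}
    {x : Fin (n + 1) → ℝ} (a t : ℝ)
    (hg : DifferentiableAt ℝ g (Function.update x (Fin.last n) (a * t))) :
    HasDerivAt (fun s => g (Function.update x (Fin.last n) (a * s)))
      (a * pderivLast n g (Function.update x (Fin.last n) (a * t))) t := by
  have h1 : HasDerivAt (fun s : ℝ => a * s) a t := by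
    simpa using (hasDerivAt_id t).const_mul a
  have h2 := (hasDerivAt_update x (Fin.last n) (a * t)).scomp t h1
  have h3 := hg.hasFDerivAt.comp_hasDerivAt t h2
  simpa [pderivLast, Function.comp_def, map_smul, smul_eq_mul] using h3

lemma iteratedDerivWithin_comp_update {n q : ℕ} {r : Fin (n + 1) → ℝ}
    {f : (Fin (n + 1) → ℝ) → ℝ}
    (hf : ContDiffOn ℝ (q + 1 : ℕ) f {x | ∀ i, |x i| < r i})
    {x : Fin (n + 1) → ℝ} (hx : x ∈ {x : Fin (n + 1) → ℝ | ∀ i, |x i| < r i})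
    (a b c : ℝ) (hbc : b < c)
    (hab : ∀ t ∈ Set.Icc b c, |a * t| < r (Fin.last n)) :
    ∀ k ≤ q + 1, ∀ t ∈ Set.Icc b c,
      iteratedDerivWithin k (fun s => f (Function.update x (Fin.last n) (a * s)))
          (Set.Icc b c) t
        = a ^ k * (pderivLast n)^[k] f (Function.update x (Fin.last n) (a * t)) := by
  intro k
  induction k with
  | zero => intro _ t _; simp
  | succ k ih =>
    intro hk t ht
    have hk' : k ≤ q + 1 := by omega
    rw [iteratedDerivWithin_succ]
    rw [derivWithin_congr (fun u hu => ih hk' u hu) (ih hk' t ht)]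
    have hdiff : DifferentiableAt ℝ ((pderivLast n)^[k] f)
        (Function.update x (Fin.last n) (a * t)) := by
      have hmem := update_mem_polydisk hx (hab t ht)
      have := (iter_contDiffOn hf k hk').contDiffAt ((isOpen_polydisk r).mem_nhds hmem)
      exact this.differentiableAt (by norm_cast; omega)
    have hda := (hasDerivAt_comp_update a t hdiff).const_mul (a ^ k)
    rw [(hda.hasDerivWithinAt).derivWithin ((uniqueDiffOn_Icc hbc) t ht)]
    rw [Function.iterate_succ_apply']
    ring

lemma key_division {n q : ℕ} {r : Fin (n + 1) → ℝ} (hr : ∀ i, 0 < r i)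
    {f : (Fin (n + 1) → ℝ) → ℝ}
    (hf : ContDiffOn ℝ (q + 1 : ℕ) f {x | ∀ i, |x i| < r i})
    (hvanish : ∀ k ≤ q, ∀ x ∈ {x : Fin (n + 1) → ℝ | ∀ i, |x i| < r i},
      x (Fin.last n) = 0 → (pderivLast n)^[k] f x = 0)
    {x : Fin (n + 1) → ℝ} (hx : x ∈ {x : Fin (n + 1) → ℝ | ∀ i, |x i| < r i})
    (hsne : x (Fin.last n) ≠ 0) :
    ∃ c : ℝ, |c| < |x (Fin.last n)| ∧
      f x = (x (Fin.last n)) ^ (q + 1) * ((Nat.factorial (q + 1) : ℝ))⁻¹ *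
        (pderivLast n)^[q + 1] f (Function.update x (Fin.last n) c) := by
  have hs : |x (Fin.last n)| < r (Fin.last n) := hx (Fin.last n)
  have habs : (0 : ℝ) < |x (Fin.last n)| := abs_pos.2 hsne
  obtain ⟨a, ha1, has⟩ : ∃ a : ℝ, |a| = 1 ∧ a * |x (Fin.last n)| = x (Fin.last n) := by
    rcases lt_or_gt_of_ne hsne with h | h
    · exact ⟨-1, by norm_num, by rw [abs_of_neg h]; ring⟩
    · exact ⟨1, by norm_num, by rw [abs_of_pos h]; ring⟩
  have hab : ∀ t ∈ Set.Icc (0 : ℝ) |x (Fin.last n)|, |a * t| < r (Fin.last n) := by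
    intro t ht
    rw [abs_mul, ha1, one_mul, abs_of_nonneg ht.1]
    exact lt_of_le_of_lt ht.2 hs
  have hinner : ContDiff ℝ (q : ℕ) (fun t : ℝ => Function.update x (Fin.last n) (a * t)) :=
    (contDiff_update _ x (Fin.last n)).comp (contDiff_const.mul contDiff_id)
  have hmaps : Set.MapsTo (fun t : ℝ => Function.update x (Fin.last n) (a * t))
      (Set.Icc (0 : ℝ) |x (Fin.last n)|) {x : Fin (n + 1) → ℝ | ∀ i, |x i| < r i} :=
    fun t ht => update_mem_polydisk hx (hab t ht)
  have hφ : ContDiffOn ℝ (q : ℕ) (fun t : ℝ => f (Function.update x (Fin.last n) (a * t)))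
      (Set.Icc (0 : ℝ) |x (Fin.last n)|) :=
    (hf.of_le (by norm_cast; omega)).comp hinner.contDiffOn hmaps
  have hkey := iteratedDerivWithin_comp_update hf hx a 0 |x (Fin.last n)| habs hab
  have hdiffq : DifferentiableOn ℝ
      (iteratedDerivWithin q (fun t : ℝ => f (Function.update x (Fin.last n) (a * t)))
        (Set.Icc (0 : ℝ) |x (Fin.last n)|)) (Set.Ioo (0 : ℝ) |x (Fin.last n)|) := by
    intro t ht
    have htIcc : t ∈ Set.Icc (0 : ℝ) |x (Fin.last n)| := Set.Ioo_subset_Icc_self ht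
    have hdiff : DifferentiableAt ℝ ((pderivLast n)^[q] f)
        (Function.update x (Fin.last n) (a * t)) := by
      have hmem := update_mem_polydisk hx (hab t htIcc)
      have := (iter_contDiffOn hf q (by omega)).contDiffAt ((isOpen_polydisk r).mem_nhds hmem)
      exact this.differentiableAt (by norm_cast; omega)
    have hda := ((hasDerivAt_comp_update a t hdiff).const_mul (a ^ q)).differentiableAt
    refine (hda.differentiableWithinAt).congr ?_ ?_
    · intro u hu
      exact hkey q (by omega) u (Set.Ioo_subset_Icc_self hu)
    · exact hkey q (by omega) t htIcc
  obtain ⟨c', hc', heq⟩ := taylor_mean_remainder_lagrange habs.ne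
    (by rwa [Set.uIcc_of_le habs.le]) (by rwa [Set.uIcc_of_le habs.le, Set.uIoo_of_le habs.le])
  rw [Set.uIoo_of_le habs.le] at hc'
  rw [Set.uIcc_of_le habs.le] at heq
  have htay : taylorWithinEval (fun t : ℝ => f (Function.update x (Fin.last n) (a * t))) q
      (Set.Icc (0 : ℝ) |x (Fin.last n)|) 0 |x (Fin.last n)| = 0 := by
    rw [taylor_within_apply]
    apply Finset.sum_eq_zero
    intro k hk
    have hk' : k ≤ q := Nat.lt_succ_iff.mp (Finset.mem_range.mp hk)
    rw [hkey k (by omega) 0 ⟨le_refl _, le_of_lt habs⟩]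
    have h0mem : Function.update x (Fin.last n) (a * 0)
        ∈ {x : Fin (n + 1) → ℝ | ∀ i, |x i| < r i} :=
      update_mem_polydisk hx (by simpa using hr (Fin.last n))
    have hz : (pderivLast n)^[k] f (Function.update x (Fin.last n) (a * 0)) = 0 :=
      hvanish k hk' _ h0mem (by simp)
    rw [hz]
    simp
  rw [htay, sub_zero] at heq
  have hφs : f (Function.update x (Fin.last n) (a * |x (Fin.last n)|)) = f x := by
    rw [has, Function.update_eq_self]
  rw [hkey (q + 1) le_rfl c' (Set.Ioo_subset_Icc_self hc')] at heq
  refine ⟨a * c', ?_, ?_⟩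
  · rw [abs_mul, ha1, one_mul, abs_of_pos hc'.1]
    exact hc'.2
  · have heq' : f x = a ^ (q + 1) *
        (pderivLast n)^[q + 1] f (Function.update x (Fin.last n) (a * c')) *
        |x (Fin.last n)| ^ (q + 1) / ((q + 1).factorial : ℝ) := by
      rw [← hφs]
      simpa using heq
    have hpow : a ^ (q + 1) * |x (Fin.last n)| ^ (q + 1) = (x (Fin.last n)) ^ (q + 1) := by
      rw [← mul_pow, has]
    rw [heq', div_eq_mul_inv]
    linear_combination (((pderivLast n)^[q + 1] f (Function.update x (Fin.last n) (a * c'))) *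
      (((q + 1).factorial : ℝ))⁻¹) * hpow


/-- Monomial division: if `f` is `C^{q+1}` on a polydisk `U ⊆ ℝ^{n+1}` and its
partial derivatives `∂ᵏf/∂xₙᵏ` vanish on `{xₙ = 0}` for `0 ≤ k ≤ q`, then
`f = xₙ^{q+1}·g` for a continuous `g` on `U` with
`g = (1/(q+1)!)·∂^{q+1}f/∂xₙ^{q+1}` on `{xₙ = 0}`. -/
theorem monomial_division (n q : ℕ) (r : Fin (n + 1) → ℝ) (hr : ∀ i, 0 < r i)
    (f : (Fin (n + 1) → ℝ) → ℝ)
    (hf : ContDiffOn ℝ (q + 1 : ℕ) f {x | ∀ i, |x i| < r i})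
    (hvanish : ∀ k ≤ q, ∀ x ∈ {x : Fin (n + 1) → ℝ | ∀ i, |x i| < r i},
      x (Fin.last n) = 0 → (pderivLast n)^[k] f x = 0) :
    ∃ g : (Fin (n + 1) → ℝ) → ℝ,
      ContinuousOn g {x | ∀ i, |x i| < r i} ∧
      (∀ x ∈ {x : Fin (n + 1) → ℝ | ∀ i, |x i| < r i},
        f x = (x (Fin.last n)) ^ (q + 1) * g x) ∧
      (∀ x ∈ {x : Fin (n + 1) → ℝ | ∀ i, |x i| < r i}, x (Fin.last n) = 0 →
        g x = (((q + 1).factorial : ℝ))⁻¹ * (pderivLast n)^[q + 1] f x) := by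
  classical
  set U := {x : Fin (n + 1) → ℝ | ∀ i, |x i| < r i} with hU
  set v : (Fin (n + 1) → ℝ) → ℝ :=
    fun y => (((q + 1).factorial : ℝ))⁻¹ * (pderivLast n)^[q + 1] f y with hv
  set g : (Fin (n + 1) → ℝ) → ℝ :=
    fun y => if y (Fin.last n) = 0 then v y else f y / (y (Fin.last n)) ^ (q + 1) with hg
  have hFcont : ContinuousOn ((pderivLast n)^[q + 1] f) U := by
    simpa using (iter_contDiffOn hf (q + 1) le_rfl).continuousOn
  have hvcont : ContinuousOn v U := continuousOn_const.mul hFcont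
  refine ⟨g, ?_, ?_, ?_⟩
  · -- continuity
    intro x hx
    apply ContinuousAt.continuousWithinAt
    by_cases h0 : x (Fin.last n) = 0
    · rw [Metric.continuousAt_iff]
      intro ε hε
      have hvat : ContinuousAt v x := hvcont.continuousAt ((isOpen_polydisk r).mem_nhds hx)
      obtain ⟨δ₁, hδ₁, hδ₁'⟩ := Metric.continuousAt_iff.mp hvat ε hε
      obtain ⟨δ₂, hδ₂, hδ₂'⟩ := Metric.isOpen_iff.mp (isOpen_polydisk r) x hx
      refine ⟨min δ₁ δ₂, lt_min hδ₁ hδ₂, ?_⟩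
      intro y hy
      have hyδ₁ : dist y x < δ₁ := lt_of_lt_of_le hy (min_le_left _ _)
      have hyU : y ∈ U := hδ₂' (lt_of_lt_of_le hy (min_le_right _ _))
      have hgx : g x = v x := if_pos h0
      by_cases hy0 : y (Fin.last n) = 0
      · have : g y = v y := if_pos hy0
        rw [this, hgx]
        exact hδ₁' hyδ₁
      · obtain ⟨c, hc, heq⟩ := key_division hr hf hvanish hyU hy0
        have hyne : (y (Fin.last n)) ^ (q + 1) ≠ 0 := pow_ne_zero _ hy0
        have hgy : g y = v (Function.update y (Fin.last n) c) := by
          rw [hg]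
          simp only [if_neg hy0, heq, hv]
          field_simp
        have hdistc : dist (Function.update y (Fin.last n) c) x < δ₁ := by
          rw [dist_pi_lt_iff hδ₁]
          intro i
          rcases eq_or_ne i (Fin.last n) with h | h
          · subst h
            rw [Function.update_self, Real.dist_eq, h0, sub_zero]
            calc |c| < |y (Fin.last n)| := hc
              _ = dist (y (Fin.last n)) (x (Fin.last n)) := by
                  rw [Real.dist_eq, h0, sub_zero]
              _ ≤ dist y x := dist_le_pi_dist y x _
              _ < δ₁ := hyδ₁
          · rw [Function.update_of_ne h]
            exact lt_of_le_of_lt (dist_le_pi_dist y x i) hyδ₁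
        rw [hgy, hgx]
        exact hδ₁' hdistc
    · have hcf : ContinuousAt f x :=
        hf.continuousOn.continuousAt ((isOpen_polydisk r).mem_nhds hx)
      have hclast : ContinuousAt (fun y : Fin (n + 1) → ℝ => (y (Fin.last n)) ^ (q + 1)) x :=
        ((continuous_apply (Fin.last n)).continuousAt).pow _
      have hct : ContinuousAt (fun y => f y / (y (Fin.last n)) ^ (q + 1)) x :=
        hcf.div hclast (pow_ne_zero _ h0)
      apply hct.congr
      have hopen : IsOpen {y : Fin (n + 1) → ℝ | y (Fin.last n) ≠ 0} :=
        isOpen_compl_singleton.preimage (continuous_apply (Fin.last n))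
      filter_upwards [hopen.mem_nhds h0] with y hy
      exact (if_neg hy).symm
  · -- division identity
    intro x hx
    by_cases h0 : x (Fin.last n) = 0
    · have hf0 : f x = 0 := by simpa using hvanish 0 (Nat.zero_le q) x hx h0
      rw [hf0, h0]
      simp
    · rw [hg]
      simp only [if_neg h0]
      field_simp
  · -- boundary value
    intro x hx h0
    rw [hg]
    simp only [if_pos h0, hv]
end
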